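/- arXiv:2207.14082 — 6 statements merged into one kernel-verified Lean document; each statement's English description precedes it below -/
import Mathlib

section
/- Let Σ ⊂ ℝ^p be a nonempty closed box (a product of closed intervals) with Euclidean projection proj_Σ, let D ∈ ℝ^{p×p} be a diagonal matrix with strictly positive diagonal entries, H ∈ ℝ^{q×p}, w ∈ ℝ^p, λ̃ ∈ ℝ^q, and β > 0. Define F : ℝ^q → ℝ^q by F(λ) := βλ − H proj_Σ(D^{-1}(w − Hᵀλ)) − λ̃. Then F is strongly monotone with modulus β, i.e. ⟨F(λ) − F(μ), λ − μ⟩ ≥ β‖λ − μ‖² for all λ, μ ∈ ℝ^q; consequently the equation F(λ) = 0 has exactly one solution. -/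
open scoped RealInnerProductSpace
open Matrix

/-- Matrix-vector multiplication regarded as a map between Euclidean spaces. -/
noncomputable def mv {q p : ℕ} (A : Matrix (Fin q) (Fin p) ℝ)
    (x : EuclideanSpace ℝ (Fin p)) : EuclideanSpace ℝ (Fin q) :=
  (WithLp.equiv 2 _).symm (A.mulVec ((WithLp.equiv 2 _) x))

lemma mv_apply {q p : ℕ} (A : Matrix (Fin q) (Fin p) ℝ) (x : EuclideanSpace ℝ (Fin p))
    (i : Fin q) : mv A x i = ∑ j, A i j * x j := by
  simp [mv, Matrix.mulVec, dotProduct]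

lemma mv_sub {q p : ℕ} (A : Matrix (Fin q) (Fin p) ℝ) (x y : EuclideanSpace ℝ (Fin p)) :
    mv A (x - y) = mv A x - mv A y := by
  ext i
  simp [mv_apply, mul_sub, Finset.sum_sub_distrib]

lemma inner_mv_left {q p : ℕ} (A : Matrix (Fin q) (Fin p) ℝ) (x : EuclideanSpace ℝ (Fin p))
    (z : EuclideanSpace ℝ (Fin q)) : ⟪mv A x, z⟫ = ∑ i, x i * mv Aᵀ z i := by
  simp only [PiLp.inner_apply, RCLike.inner_apply, conj_trivial, mv_apply,
    Matrix.transpose_apply, Finset.sum_mul, Finset.mul_sum]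
  rw [Finset.sum_comm]
  exact Finset.sum_congr rfl fun i _ => Finset.sum_congr rfl fun j _ => by ring

/-- variational inequality for a best approximation in an order-connected subset of ℝ. -/
lemma var_ineq {S : Set ℝ} (hS : S.OrdConnected) {s a : ℝ} (ha : a ∈ S)
    (hbest : ∀ c ∈ S, (s - a) ^ 2 ≤ (s - c) ^ 2) {c : ℝ} (hc : c ∈ S) :
    (s - a) * (c - a) ≤ 0 := by
  by_contra h
  push_neg at h
  have hca : c ≠ a := by rintro rfl; simp at h
  have hca' : c - a ≠ 0 := sub_ne_zero.mpr hca
  have hn : 0 < (c - a) ^ 2 := by positivity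
  set m := (s - a) * (c - a) with hm
  set n := (c - a) ^ 2 with hnn
  set θ := min 1 (m / n) with hθ
  have hθ0 : 0 < θ := lt_min one_pos (div_pos h hn)
  have hθ1 : θ ≤ 1 := min_le_left _ _
  have hθn : θ * n ≤ m := by
    calc θ * n ≤ (m / n) * n := mul_le_mul_of_nonneg_right (min_le_right _ _) hn.le
    _ = m := by field_simp
  have hy : a + θ * (c - a) ∈ S := by
    apply hS.uIcc_subset ha hc
    rcases le_total a c with h' | h'
    · rw [Set.uIcc_of_le h']
      constructor <;> nlinarith
    · rw [Set.uIcc_of_ge h']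
      constructor <;> nlinarith
  have hbb := hbest _ hy
  have hθsq : θ * (θ * n) ≤ θ * m := mul_le_mul_of_nonneg_left hθn hθ0.le
  nlinarith [mul_pos hθ0 h]

lemma mono1d {s t a b : ℝ} (h1 : (s - a) * (b - a) ≤ 0) (h2 : (t - b) * (a - b) ≤ 0) :
    (a - b) ^ 2 ≤ (a - b) * (s - t) := by nlinarith

set_option maxHeartbeats 1000000 in
/-- With `Σ` a nonempty closed box, `proj` its Euclidean projection,
`D` diagonal with positive entries, the map
`F(λ) = βλ − H proj_Σ(D⁻¹(w − Hᵀλ)) − λ̃` is strongly monotone with modulus `β > 0`,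
and hence `F(λ) = 0` has exactly one solution. -/
theorem stmt1 {p q : ℕ}
    (I : Fin p → Set ℝ)
    (hne : ∀ i, (I i).Nonempty) (hcl : ∀ i, IsClosed (I i))
    (hint : ∀ i, (I i).OrdConnected)
    (proj : EuclideanSpace ℝ (Fin p) → EuclideanSpace ℝ (Fin p))
    (hmem : ∀ x, proj x ∈ {u : EuclideanSpace ℝ (Fin p) | ∀ i, u i ∈ I i})
    (hnear : ∀ x, ∀ y ∈ {u : EuclideanSpace ℝ (Fin p) | ∀ i, u i ∈ I i},
      dist x (proj x) ≤ dist x y)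
    (d : Fin p → ℝ) (hd : ∀ i, 0 < d i)
    (H : Matrix (Fin q) (Fin p) ℝ) (w : EuclideanSpace ℝ (Fin p))
    (lamTil : EuclideanSpace ℝ (Fin q)) (β : ℝ) (hβ : 0 < β)
    (F : EuclideanSpace ℝ (Fin q) → EuclideanSpace ℝ (Fin q))
    (hF : ∀ lam, F lam =
      β • lam - mv H (proj (mv (Matrix.diagonal d)⁻¹ (w - mv Hᵀ lam))) - lamTil) :
    (∀ lam mu, β * ‖lam - mu‖ ^ 2 ≤ ⟪F lam - F mu, lam - mu⟫) ∧
      (∃! lam, F lam = 0) := by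
  classical
  -- coordinatewise best-approximation property of the projection
  have coordNear : ∀ (x : EuclideanSpace ℝ (Fin p)) (i : Fin p), ∀ t ∈ I i,
      (x i - proj x i) ^ 2 ≤ (x i - t) ^ 2 := by
    intro x i t ht
    set y : EuclideanSpace ℝ (Fin p) :=
      (WithLp.equiv 2 _).symm (Function.update ((WithLp.equiv 2 _) (proj x)) i t) with hy
    have hyj : ∀ j, y j = if j = i then t else proj x j := by
      intro j; simp [hy, Function.update]
    have hymem : y ∈ {u : EuclideanSpace ℝ (Fin p) | ∀ i, u i ∈ I i} := by
      intro j
      rw [hyj]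
      by_cases hji : j = i
      · subst hji; simp [ht]
      · simp only [hji, if_false]; exact hmem x j
    have hd2 := hnear x y hymem
    have hsum : ∑ j, dist (x j) (proj x j) ^ 2 ≤ ∑ j, dist (x j) (y j) ^ 2 := by
      rw [EuclideanSpace.dist_eq x (proj x), EuclideanSpace.dist_eq x y] at hd2
      have h1 : 0 ≤ ∑ j, dist (x j) (proj x j) ^ 2 :=
        Finset.sum_nonneg fun _ _ => sq_nonneg _
      have h2 : 0 ≤ ∑ j, dist (x j) (y j) ^ 2 :=
        Finset.sum_nonneg fun _ _ => sq_nonneg _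
      nlinarith [Real.sq_sqrt h1, Real.sq_sqrt h2, Real.sqrt_nonneg
        (∑ j, dist (x j) (proj x j) ^ 2), Real.sqrt_nonneg (∑ j, dist (x j) (y j) ^ 2)]
    have e1 := Finset.add_sum_erase Finset.univ (fun j => dist (x j) (proj x j) ^ 2)
      (Finset.mem_univ i)
    have e2 := Finset.add_sum_erase Finset.univ (fun j => dist (x j) (y j) ^ 2)
      (Finset.mem_univ i)
    have etail : ∑ j ∈ Finset.univ.erase i, dist (x j) (y j) ^ 2
        = ∑ j ∈ Finset.univ.erase i, dist (x j) (proj x j) ^ 2 := by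
      apply Finset.sum_congr rfl
      intro j hj
      rw [hyj j, if_neg (Finset.ne_of_mem_erase hj)]
    have hi : dist (x i) (proj x i) ^ 2 ≤ dist (x i) (y i) ^ 2 := by
      rw [← e1, ← e2, etail] at hsum
      exact le_of_add_le_add_right hsum
    rw [hyj i, if_pos rfl] at hi
    rw [Real.dist_eq, Real.dist_eq, sq_abs, sq_abs] at hi
    exact hi
  -- coordinatewise monotonicity of the projection
  have hmono : ∀ (x y : EuclideanSpace ℝ (Fin p)) (i : Fin p),
      (proj x i - proj y i) ^ 2 ≤ (proj x i - proj y i) * (x i - y i) := by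
    intro x y i
    exact mono1d (var_ineq (hint i) (hmem x i) (coordNear x i) (hmem y i))
      (var_ineq (hint i) (hmem y i) (coordNear y i) (hmem x i))
  -- strong monotonicity of F
  have key : ∀ lam mu, β * ‖lam - mu‖ ^ 2 ≤ ⟪F lam - F mu, lam - mu⟫ := by
    intro lam mu
    set u := mv (Matrix.diagonal d)⁻¹ (w - mv Hᵀ lam) with hu
    set v := mv (Matrix.diagonal d)⁻¹ (w - mv Hᵀ mu) with hv
    have hFd : F lam - F mu = β • (lam - mu) - (mv H (proj u) - mv H (proj v)) := by
      rw [hF, hF, smul_sub]; abel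
    have hdiag : ∀ (z : EuclideanSpace ℝ (Fin p)) (i : Fin p),
        mv (Matrix.diagonal d)⁻¹ z i = (d i)⁻¹ * z i := by
      intro z i
      have hdinv : (Matrix.diagonal d)⁻¹ = Matrix.diagonal fun j => (d j)⁻¹ := by
        apply Matrix.inv_eq_right_inv
        rw [Matrix.diagonal_mul_diagonal,
          show (fun i => d i * (d i)⁻¹) = fun _ => (1 : ℝ) from
            funext fun j => mul_inv_cancel₀ (hd j).ne',
          Matrix.diagonal_one]
      rw [hdinv]
      simp [mv, Matrix.mulVec_diagonal]
    have hneg : ⟪mv H (proj u) - mv H (proj v), lam - mu⟫ ≤ 0 := by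
      rw [← mv_sub, inner_mv_left]
      apply Finset.sum_nonpos
      intro i _
      have hdne : d i ≠ 0 := (hd i).ne'
      have h1 : u i = (d i)⁻¹ * (w i - mv Hᵀ lam i) := by rw [hu, hdiag]; rfl
      have h2 : v i = (d i)⁻¹ * (w i - mv Hᵀ mu i) := by rw [hv, hdiag]; rfl
      have hHt : mv Hᵀ (lam - mu) i = -(d i * (u i - v i)) := by
        rw [mv_sub]
        have e : (mv Hᵀ lam - mv Hᵀ mu) i = mv Hᵀ lam i - mv Hᵀ mu i := rfl
        rw [e, h1, h2]
        field_simp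
        ring
      have hsub : (proj u - proj v) i = proj u i - proj v i := rfl
      rw [hsub, hHt]
      have hpos : 0 ≤ (proj u i - proj v i) * (u i - v i) :=
        le_trans (sq_nonneg _) (hmono u v i)
      nlinarith [mul_nonneg (hd i).le hpos]
    rw [hFd, inner_sub_left, real_inner_smul_left, real_inner_self_eq_norm_sq]
    linarith
  refine ⟨key, ?_⟩
  -- Lipschitz constants from the three linear maps
  let LH : EuclideanSpace ℝ (Fin p) →L[ℝ] EuclideanSpace ℝ (Fin q) :=
    LinearMap.toContinuousLinearMap (Matrix.toEuclideanLin H)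
  let LD : EuclideanSpace ℝ (Fin p) →L[ℝ] EuclideanSpace ℝ (Fin p) :=
    LinearMap.toContinuousLinearMap (Matrix.toEuclideanLin (Matrix.diagonal d)⁻¹)
  let LHt : EuclideanSpace ℝ (Fin q) →L[ℝ] EuclideanSpace ℝ (Fin p) :=
    LinearMap.toContinuousLinearMap (Matrix.toEuclideanLin Hᵀ)
  have hopH : ∀ x y, ‖mv H x - mv H y‖ ≤ ‖LH‖ * ‖x - y‖ := by
    intro x y
    have e : mv H x - mv H y = LH (x - y) := by rw [map_sub]; rfl
    rw [e]; exact LH.le_opNorm _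
  have hopD : ∀ x y, ‖mv (Matrix.diagonal d)⁻¹ x - mv (Matrix.diagonal d)⁻¹ y‖
      ≤ ‖LD‖ * ‖x - y‖ := by
    intro x y
    have e : mv (Matrix.diagonal d)⁻¹ x - mv (Matrix.diagonal d)⁻¹ y = LD (x - y) := by
      rw [map_sub]; rfl
    rw [e]; exact LD.le_opNorm _
  have hopHt : ∀ x y, ‖mv Hᵀ x - mv Hᵀ y‖ ≤ ‖LHt‖ * ‖x - y‖ := by
    intro x y
    have e : mv Hᵀ x - mv Hᵀ y = LHt (x - y) := by rw [map_sub]; rfl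
    rw [e]; exact LHt.le_opNorm _
  -- projection is nonexpansive
  have hproj : ∀ x y, ‖proj x - proj y‖ ≤ ‖x - y‖ := by
    intro x y
    rw [EuclideanSpace.norm_eq, EuclideanSpace.norm_eq]
    apply Real.sqrt_le_sqrt
    apply Finset.sum_le_sum
    intro i _
    have h := hmono x y i
    have e1 : (proj x - proj y) i = proj x i - proj y i := rfl
    have e2 : (x - y) i = x i - y i := rfl
    rw [e1, e2, Real.norm_eq_abs, Real.norm_eq_abs, sq_abs, sq_abs]
    nlinarith [sq_nonneg (proj x i - proj y i - (x i - y i)),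
      sq_nonneg (proj x i - proj y i + (x i - y i))]
  set L : ℝ := ‖LH‖ * (‖LD‖ * ‖LHt‖) with hLdef
  have hL0 : 0 ≤ L := by positivity
  have hGlip : ∀ a b,
      ‖mv H (proj (mv (Matrix.diagonal d)⁻¹ (w - mv Hᵀ a)))
        - mv H (proj (mv (Matrix.diagonal d)⁻¹ (w - mv Hᵀ b)))‖ ≤ L * ‖a - b‖ := by
    intro a b
    have s3 : ‖mv (Matrix.diagonal d)⁻¹ (w - mv Hᵀ a) - mv (Matrix.diagonal d)⁻¹ (w - mv Hᵀ b)‖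
        ≤ ‖LD‖ * (‖LHt‖ * ‖a - b‖) := by
      calc ‖mv (Matrix.diagonal d)⁻¹ (w - mv Hᵀ a) - mv (Matrix.diagonal d)⁻¹ (w - mv Hᵀ b)‖
          ≤ ‖LD‖ * ‖(w - mv Hᵀ a) - (w - mv Hᵀ b)‖ := hopD _ _
        _ = ‖LD‖ * ‖mv Hᵀ b - mv Hᵀ a‖ := by rw [show (w - mv Hᵀ a) - (w - mv Hᵀ b)
              = mv Hᵀ b - mv Hᵀ a by abel]
        _ ≤ ‖LD‖ * (‖LHt‖ * ‖b - a‖) :=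
            mul_le_mul_of_nonneg_left (hopHt b a) (norm_nonneg _)
        _ = ‖LD‖ * (‖LHt‖ * ‖a - b‖) := by rw [norm_sub_rev]
    calc ‖mv H (proj (mv (Matrix.diagonal d)⁻¹ (w - mv Hᵀ a)))
          - mv H (proj (mv (Matrix.diagonal d)⁻¹ (w - mv Hᵀ b)))‖
        ≤ ‖LH‖ * ‖proj (mv (Matrix.diagonal d)⁻¹ (w - mv Hᵀ a))
            - proj (mv (Matrix.diagonal d)⁻¹ (w - mv Hᵀ b))‖ := hopH _ _
      _ ≤ ‖LH‖ * (‖LD‖ * (‖LHt‖ * ‖a - b‖)) := by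
          apply mul_le_mul_of_nonneg_left _ (norm_nonneg _)
          exact le_trans (hproj _ _) s3
      _ = L * ‖a - b‖ := by rw [hLdef]; ring
  set K : ℝ := β + L with hKdef
  have hK0 : 0 < K := by linarith
  have hFlip : ∀ a b, ‖F a - F b‖ ≤ K * ‖a - b‖ := by
    intro a b
    have hd' : F a - F b = β • (a - b)
        - (mv H (proj (mv (Matrix.diagonal d)⁻¹ (w - mv Hᵀ a)))
          - mv H (proj (mv (Matrix.diagonal d)⁻¹ (w - mv Hᵀ b)))) := by
      rw [hF, hF, smul_sub]; abel
    calc ‖F a - F b‖ ≤ ‖β • (a - b)‖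
        + ‖mv H (proj (mv (Matrix.diagonal d)⁻¹ (w - mv Hᵀ a)))
          - mv H (proj (mv (Matrix.diagonal d)⁻¹ (w - mv Hᵀ b)))‖ := by
          rw [hd']; exact norm_sub_le _ _
      _ ≤ β * ‖a - b‖ + L * ‖a - b‖ := by
          have := hGlip a b
          rw [norm_smul, Real.norm_eq_abs, abs_of_pos hβ]
          linarith
      _ = K * ‖a - b‖ := by rw [hKdef]; ring
  set γ : ℝ := β / K ^ 2 with hγdef
  have hγ0 : 0 < γ := by positivity
  have hγK2 : γ * K ^ 2 = β := by rw [hγdef]; field_simp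
  have hc0 : 0 ≤ 1 - γ * β := by
    have hββ : β ^ 2 ≤ K ^ 2 := by nlinarith
    have : γ * β ≤ 1 := by
      rw [hγdef, div_mul_eq_mul_div, div_le_one (by positivity)]
      nlinarith
    linarith
  have hc1 : 1 - γ * β < 1 := by nlinarith [mul_pos hγ0 hβ]
  set T : EuclideanSpace ℝ (Fin q) → EuclideanSpace ℝ (Fin q) :=
    fun lam => lam - γ • F lam with hT
  have hTsq : ∀ a b, ‖T a - T b‖ ^ 2 ≤ (1 - γ * β) * ‖a - b‖ ^ 2 := by
    intro a b
    have e : T a - T b = (a - b) - γ • (F a - F b) := by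
      rw [hT]; simp only; rw [smul_sub]; abel
    rw [e, norm_sub_sq_real, real_inner_smul_right, norm_smul, Real.norm_eq_abs,
      abs_of_pos hγ0]
    have h1 : β * ‖a - b‖ ^ 2 ≤ ⟪F a - F b, a - b⟫ := key a b
    have h1' : ⟪a - b, F a - F b⟫ = ⟪F a - F b, a - b⟫ := real_inner_comm _ _
    have h2 : ‖F a - F b‖ ^ 2 ≤ K ^ 2 * ‖a - b‖ ^ 2 := by
      calc ‖F a - F b‖ ^ 2 ≤ (K * ‖a - b‖) ^ 2 :=
            pow_le_pow_left₀ (norm_nonneg _) (hFlip a b) 2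
        _ = K ^ 2 * ‖a - b‖ ^ 2 := by ring
    have t1 : 2 * γ * (β * ‖a - b‖ ^ 2) ≤ 2 * γ * ⟪F a - F b, a - b⟫ :=
      mul_le_mul_of_nonneg_left h1 (by positivity)
    have t2 : γ ^ 2 * ‖F a - F b‖ ^ 2 ≤ γ ^ 2 * (K ^ 2 * ‖a - b‖ ^ 2) :=
      mul_le_mul_of_nonneg_left h2 (sq_nonneg γ)
    have t3 : γ ^ 2 * (K ^ 2 * ‖a - b‖ ^ 2) = γ * β * ‖a - b‖ ^ 2 := by
      rw [← hγK2]; ring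
    rw [h1']
    nlinarith [t1, t2, t3]
  set k : ℝ := Real.sqrt (1 - γ * β) with hkdef
  have hk0 : 0 ≤ k := Real.sqrt_nonneg _
  have hk1 : k < 1 := by
    have := Real.sqrt_lt_sqrt hc0 hc1
    rwa [Real.sqrt_one] at this
  have hlip : LipschitzWith k.toNNReal T := by
    apply LipschitzWith.of_dist_le_mul
    intro a b
    rw [dist_eq_norm, dist_eq_norm, Real.coe_toNNReal _ hk0]
    have h2 : k * ‖a - b‖ = Real.sqrt ((1 - γ * β) * ‖a - b‖ ^ 2) := by
      rw [Real.sqrt_mul hc0, Real.sqrt_sq (norm_nonneg _), hkdef]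
    rw [h2]
    calc ‖T a - T b‖ = Real.sqrt (‖T a - T b‖ ^ 2) :=
          (Real.sqrt_sq (norm_nonneg _)).symm
      _ ≤ _ := Real.sqrt_le_sqrt (hTsq a b)
  have hcontr : ContractingWith k.toNNReal T := by
    refine ⟨?_, hlip⟩
    rw [← NNReal.coe_lt_coe, Real.coe_toNNReal _ hk0]
    exact hk1
  haveI : Nonempty (EuclideanSpace ℝ (Fin q)) := ⟨0⟩
  have hfix : T (ContractingWith.fixedPoint T hcontr) = ContractingWith.fixedPoint T hcontr :=
    hcontr.fixedPoint_isFixedPt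
  set lam0 := ContractingWith.fixedPoint T hcontr with hlam0
  have hzero : F lam0 = 0 := by
    have h0 : lam0 - γ • F lam0 = lam0 := hfix
    have h2 : γ • F lam0 = 0 := by
      have := sub_eq_self.mp h0
      exact this
    rcases smul_eq_zero.mp h2 with h | h
    · exact absurd h hγ0.ne'
    · exact h
  refine ⟨lam0, hzero, ?_⟩
  intro y hy
  have hk := key y lam0
  rw [hy, hzero] at hk
  simp only [sub_zero, sub_self, inner_zero_left] at hk
  have hn2 : ‖y - lam0‖ ^ 2 ≤ 0 := by nlinarith
  have hn : ‖y - lam0‖ = 0 := by nlinarith [norm_nonneg (y - lam0)]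
  exact sub_eq_zero.mp (norm_eq_zero.mp hn)
end

section
/- Let A ∈ ℝ^{N×N} be symmetric positive definite and let R ∈ ℝ^{N×N} be such that R̄ := Rᵀ + R − RᵀAR is symmetric positive definite. Then ‖I − RA‖_A < 1 and ‖I − R̄A‖_A = ‖I − RA‖_A², where ‖B‖_A := sup_{v≠0} ‖Bv‖_A / ‖v‖_A and ‖v‖_A := √⟨Av, v⟩. -/
open Matrix
open scoped Matrix.Norms.L2Operator
open scoped MatrixOrder

/-- The `A`-norm `‖v‖_A = √⟨Av, v⟩` of a vector. -/
noncomputable def anorm {ι : Type*} [Fintype ι] (A : Matrix ι ι ℝ) (v : ι → ℝ) : ℝ :=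
  Real.sqrt (v ⬝ᵥ (A *ᵥ v))

/-- The `A`-operator norm `‖B‖_A = sup_{v ≠ 0} ‖Bv‖_A / ‖v‖_A` of a matrix. -/
noncomputable def aOpNorm {ι : Type*} [Fintype ι] (A B : Matrix ι ι ℝ) : ℝ :=
  sSup {t | ∃ v : ι → ℝ, v ≠ 0 ∧ t = anorm A (B *ᵥ v) / anorm A v}

namespace Stmt9Aux

variable {N : ℕ}

noncomputable def ee {N : ℕ} : (Fin N → ℝ) → EuclideanSpace ℝ (Fin N) :=
  (WithLp.equiv 2 (Fin N → ℝ)).symm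

lemma ee_norm (x : Fin N → ℝ) : ‖ee x‖ = Real.sqrt (x ⬝ᵥ x) := by
  rw [EuclideanSpace.norm_eq]
  congr 1
  simp [ee, dotProduct, Real.norm_eq_abs, sq_abs, pow_two]

lemma ct_eq (M : Matrix (Fin N) (Fin N) ℝ) : Mᴴ = Mᵀ := by
  ext i j; simp [conjTranspose_apply]

lemma dot_MtM (M : Matrix (Fin N) (Fin N) ℝ) (w : Fin N → ℝ) :
    w ⬝ᵥ ((Mᵀ * M) *ᵥ w) = (M *ᵥ w) ⬝ᵥ (M *ᵥ w) := by
  rw [← mulVec_mulVec, dotProduct_mulVec, vecMul_transpose]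

lemma anorm_eq {S : Matrix (Fin N) (Fin N) ℝ} (hSt : Sᵀ = S) (v : Fin N → ℝ) :
    anorm (S * S) v = ‖ee (S *ᵥ v)‖ := by
  rw [anorm, ee_norm]
  congr 1
  rw [show S * S = Sᵀ * S by rw [hSt]]
  exact dot_MtM S v

end Stmt9Aux

namespace Stmt9Aux

lemma posdef_conj {A S : Matrix (Fin N) (Fin N) ℝ} (hA : A.PosDef) (hS : IsUnit S) :
    (Sᵀ * A * S).PosDef := by
  have hinj : Function.Injective S.mulVec := mulVec_injective_iff_isUnit.mpr hS
  have hAt : Aᵀ = A := by rw [← ct_eq]; exact hA.isHermitian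
  refine PosDef.of_dotProduct_mulVec_pos ?_ ?_
  · show (Sᵀ * A * S)ᴴ = _
    rw [ct_eq, transpose_mul, transpose_mul, transpose_transpose, hAt, mul_assoc]
  · intro x hx
    have hx' : S *ᵥ x ≠ 0 := fun h => hx (hinj (by simpa using h))
    have h := hA.dotProduct_mulVec_pos hx'
    rw [star_trivial] at h ⊢
    calc x ⬝ᵥ ((Sᵀ * A * S) *ᵥ x)
        = x ⬝ᵥ (Sᵀ *ᵥ ((A * S) *ᵥ x)) := by rw [mulVec_mulVec, mul_assoc]
      _ = (S *ᵥ x) ⬝ᵥ ((A * S) *ᵥ x) := by rw [dotProduct_mulVec, vecMul_transpose]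
      _ = (S *ᵥ x) ⬝ᵥ (A *ᵥ (S *ᵥ x)) := by rw [mulVec_mulVec]
      _ > 0 := h

lemma sqrt_posDef {A : Matrix (Fin N) (Fin N) ℝ} (hA : A.PosDef) :
    (CFC.sqrt A).PosDef := by
  set S := CFC.sqrt A with hSdef
  have hps : S.PosSemidef := (CFC.sqrt_nonneg A).posSemidef
  refine PosDef.of_dotProduct_mulVec_pos hps.1 fun x hx => ?_
  rcases (hps.dotProduct_mulVec_nonneg x).lt_or_eq with h | h
  · exact h
  · exfalso
    have hz : S *ᵥ x = 0 := (hps.dotProduct_mulVec_zero_iff x).mp h.symm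
    have h2 := hA.dotProduct_mulVec_pos hx
    rw [star_trivial, ← CFC.sqrt_mul_sqrt_self A hA.posSemidef.nonneg, ← hSdef, ← mulVec_mulVec, hz,
      mulVec_zero, dotProduct_zero] at h2
    exact lt_irrefl 0 h2

end Stmt9Aux

namespace Stmt9Aux

lemma aOpNorm_eq (S B : Matrix (Fin N) (Fin N) ℝ) (hS : S.PosDef) :
    aOpNorm (S * S) B = ‖S * B * S⁻¹‖ := by
  have hSt : Sᵀ = S := by rw [← ct_eq]; exact hS.isHermitian
  have hU := hS.isUnit
  have hUdet : IsUnit S.det := (isUnit_iff_isUnit_det _).mp hU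
  have hmul : S⁻¹ * S = 1 := nonsing_inv_mul _ hUdet
  have hmul' : S * S⁻¹ = 1 := mul_nonsing_inv _ hUdet
  have hinj : Function.Injective S.mulVec := mulVec_injective_iff_isUnit.mpr hU
  set C := S * B * S⁻¹ with hC
  have key : ∀ v : Fin N → ℝ, C *ᵥ (S *ᵥ v) = S *ᵥ (B *ᵥ v) := by
    intro v
    rw [mulVec_mulVec, hC, mul_assoc (S * B), hmul, mul_one, ← mulVec_mulVec]
  have hset : {t | ∃ v : Fin N → ℝ, v ≠ 0 ∧ t = anorm (S * S) (B *ᵥ v) / anorm (S * S) v}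
      = {t | ∃ w : Fin N → ℝ, w ≠ 0 ∧ t = ‖ee (C *ᵥ w)‖ / ‖ee w‖} := by
    ext t
    constructor
    · rintro ⟨v, hv, rfl⟩
      exact ⟨S *ᵥ v, fun h => hv (hinj (by simpa using h)),
        by rw [anorm_eq hSt, anorm_eq hSt, key]⟩
    · rintro ⟨w, hw, rfl⟩
      refine ⟨S⁻¹ *ᵥ w, ?_, ?_⟩
      · intro h
        apply hw
        have : S *ᵥ (S⁻¹ *ᵥ w) = S *ᵥ 0 := by rw [h]
        rwa [mulVec_mulVec, hmul', one_mulVec, mulVec_zero] at this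
      · have hw' : S *ᵥ (S⁻¹ *ᵥ w) = w := by rw [mulVec_mulVec, hmul', one_mulVec]
        rw [anorm_eq hSt, anorm_eq hSt, hw', ← hw', key, hw']
  rw [aOpNorm, hset]
  have hbdd : ∀ w : Fin N → ℝ, w ≠ 0 → ‖ee (C *ᵥ w)‖ / ‖ee w‖ ≤ ‖C‖ := by
    intro w hw
    have hwpos : 0 < ‖ee w‖ := by
      rw [norm_pos_iff]
      exact fun h => hw (by simpa [ee] using h)
    rw [div_le_iff₀ hwpos]
    exact C.l2_opNorm_mulVec (ee w)
  apply le_antisymm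
  · apply Real.sSup_le
    · rintro t ⟨w, hw, rfl⟩
      exact hbdd w hw
    · exact norm_nonneg _
  · rw [l2_opNorm_def]
    apply ContinuousLinearMap.opNorm_le_bound
    · apply Real.sSup_nonneg
      rintro t ⟨w, hw, rfl⟩
      positivity
    · intro x
      by_cases hx : x = 0
      · simp [hx]
      · have hx' : (WithLp.equiv 2 (Fin N → ℝ)) x ≠ 0 := fun h => hx (by simpa using h)
        have hmem : ‖ee (C *ᵥ (WithLp.equiv 2 (Fin N → ℝ)) x)‖ / ‖ee ((WithLp.equiv 2 (Fin N → ℝ)) x)‖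
            ∈ {t | ∃ w : Fin N → ℝ, w ≠ 0 ∧ t = ‖ee (C *ᵥ w)‖ / ‖ee w‖} := ⟨_, hx', rfl⟩
        have hb : BddAbove {t | ∃ w : Fin N → ℝ, w ≠ 0 ∧ t = ‖ee (C *ᵥ w)‖ / ‖ee w‖} :=
          ⟨‖C‖, by rintro t ⟨w, hw, rfl⟩; exact hbdd w hw⟩
        have hle := le_csSup hb hmem
        have hxe : ee ((WithLp.equiv 2 (Fin N → ℝ)) x) = x := rfl
        have hxpos : 0 < ‖x‖ := norm_pos_iff.mpr hx
        have happ : ((toEuclideanLin.trans LinearMap.toContinuousLinearMap) C) x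
            = ee (C *ᵥ (WithLp.equiv 2 (Fin N → ℝ)) x) := rfl
        rw [happ, ← hxe]
        rw [hxe] at hle ⊢
        rw [div_le_iff₀ hxpos] at hle
        exact hle

end Stmt9Aux

namespace Stmt9Aux

lemma dot_self_nonneg (u : Fin N → ℝ) : 0 ≤ u ⬝ᵥ u :=
  Finset.sum_nonneg fun i _ => mul_self_nonneg _

lemma ee_norm_sq (u : Fin N → ℝ) : ‖ee u‖ ^ 2 = u ⬝ᵥ u := by
  rw [ee_norm, Real.sq_sqrt (dot_self_nonneg u)]

lemma opnorm_lt_one (hN : 0 < N) (M : Matrix (Fin N) (Fin N) ℝ)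
    (hP : (1 - Mᵀ * M).PosDef) : ‖M‖ < 1 := by
  haveI : Nontrivial (EuclideanSpace ℝ (Fin N)) := by
    refine ⟨ee 0, ee 1, fun h => ?_⟩
    have h2 : (0 : Fin N → ℝ) = 1 := (WithLp.equiv 2 (Fin N → ℝ)).symm.injective h
    have := congrFun h2 ⟨0, hN⟩
    simp at this
  set T := Matrix.toEuclideanCLM (𝕜 := ℝ) M with hT
  have hcont : Continuous fun x : EuclideanSpace ℝ (Fin N) => ‖T x‖ := T.continuous.norm
  obtain ⟨x₀, hx₀s, hx₀max⟩ := (isCompact_sphere (0 : EuclideanSpace ℝ (Fin N)) 1).exists_isMaxOn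
    (NormedSpace.sphere_nonempty.mpr zero_le_one) hcont.continuousOn
  have hx₀n : ‖x₀‖ = 1 := by simpa using mem_sphere_iff_norm.mp hx₀s
  set c := ‖T x₀‖ with hc
  have hTapp : ∀ x : EuclideanSpace ℝ (Fin N),
      T x = ee (M *ᵥ (WithLp.equiv 2 (Fin N → ℝ)) x) := fun _ => rfl
  have hclt : c < 1 := by
    have hx0 : (WithLp.equiv 2 (Fin N → ℝ)) x₀ ≠ 0 := by
      intro h
      have : x₀ = 0 := by simpa using h
      rw [this] at hx₀n; simp at hx₀n
    set w := (WithLp.equiv 2 (Fin N → ℝ)) x₀ with hw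
    have hq := hP.dotProduct_mulVec_pos hx0
    rw [star_trivial, sub_mulVec, one_mulVec, dotProduct_sub, dot_MtM] at hq
    have hww : w ⬝ᵥ w = 1 := by
      have : ‖ee w‖ = 1 := hx₀n
      rw [← ee_norm_sq, this, one_pow]
    have hmm : c ^ 2 = (M *ᵥ w) ⬝ᵥ (M *ᵥ w) := by
      rw [hc, hTapp, ← hw, ee_norm_sq]
    have hc2 : c ^ 2 < 1 := by nlinarith [hq, hww, hmm]
    nlinarith [norm_nonneg (T x₀), hc2]
  have hle : ‖M‖ ≤ c := by
    rw [cstar_norm_def]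
    apply ContinuousLinearMap.opNorm_le_bound _ (norm_nonneg _)
    intro x
    by_cases hx : x = 0
    · simp [hx]
    · have hxn : 0 < ‖x‖ := norm_pos_iff.mpr hx
      have hy : (‖x‖⁻¹ • x) ∈ Metric.sphere (0 : EuclideanSpace ℝ (Fin N)) 1 := by
        simp [norm_smul, abs_of_pos (inv_pos.mpr hxn), inv_mul_cancel₀ hxn.ne']
      have hmax : ‖T (‖x‖⁻¹ • x)‖ ≤ c := hx₀max hy
      have hTy : ‖T (‖x‖⁻¹ • x)‖ = ‖x‖⁻¹ * ‖T x‖ := by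
        rw [T.map_smul, norm_smul, norm_inv, norm_norm]
      rw [hTy] at hmax
      show ‖T x‖ ≤ c * ‖x‖
      calc ‖T x‖ = ‖x‖ * (‖x‖⁻¹ * ‖T x‖) := by field_simp
        _ ≤ ‖x‖ * c := by
            exact mul_le_mul_of_nonneg_left hmax hxn.le
        _ = c * ‖x‖ := mul_comm _ _
  linarith

end Stmt9Aux

/-- For SPD `A` and `R` with `R̄ = Rᵀ + R − RᵀAR` SPD, one has
`‖I − RA‖_A < 1` and `‖I − R̄A‖_A = ‖I − RA‖_A²`. -/
theorem stmt9 {N : ℕ} (A : Matrix (Fin N) (Fin N) ℝ) (hA : A.PosDef)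
    (R : Matrix (Fin N) (Fin N) ℝ) (hR : (Rᵀ + R - Rᵀ * A * R).PosDef) :
    aOpNorm A (1 - R * A) < 1 ∧
      aOpNorm A (1 - (Rᵀ + R - Rᵀ * A * R) * A) = aOpNorm A (1 - R * A) ^ 2 := by
  set Rb := Rᵀ + R - Rᵀ * A * R with hRb
  set S := CFC.sqrt A with hSdef
  have hSpd : S.PosDef := Stmt9Aux.sqrt_posDef hA
  have hSS : S * S = A := CFC.sqrt_mul_sqrt_self A hA.posSemidef.nonneg
  have hSt : Sᵀ = S := by rw [← Stmt9Aux.ct_eq]; exact hSpd.isHermitian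
  have hUdet : IsUnit S.det := (isUnit_iff_isUnit_det _).mp hSpd.isUnit
  have hmul' : S * S⁻¹ = 1 := mul_nonsing_inv _ hUdet
  set M := 1 - S * R * S with hM
  have hM1 : S * (1 - R * A) * S⁻¹ = M := by
    rw [hM, ← hSS]
    have h : S * (1 - R * (S * S)) * S⁻¹ = S * S⁻¹ - S * R * S * (S * S⁻¹) := by noncomm_ring
    rw [h, hmul', mul_one]
  have hMt : Mᵀ = 1 - S * Rᵀ * S := by
    rw [hM, transpose_sub, transpose_one, transpose_mul, transpose_mul, hSt, mul_assoc]
  have hM2 : S * (1 - Rb * A) * S⁻¹ = Mᵀ * M := by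
    rw [hMt, hM, hRb, ← hSS]
    have h : S * (1 - (Rᵀ + R - Rᵀ * (S * S) * R) * (S * S)) * S⁻¹
        = S * S⁻¹ - S * (Rᵀ + R - Rᵀ * (S * S) * R) * S * (S * S⁻¹) := by noncomm_ring
    rw [h, hmul', mul_one]
    noncomm_ring
  have t1 : aOpNorm A (1 - R * A) = ‖M‖ := by
    rw [← hSS, Stmt9Aux.aOpNorm_eq _ _ hSpd, hSS, hM1]
  have t2 : aOpNorm A (1 - Rb * A) = ‖Mᵀ * M‖ := by
    rw [← hSS, Stmt9Aux.aOpNorm_eq _ _ hSpd, hSS, hM2]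
  constructor
  · rw [t1]
    rcases Nat.eq_zero_or_pos N with h0 | hN
    · subst h0
      haveI : Subsingleton (Matrix (Fin 0) (Fin 0) ℝ) := ⟨fun a b => by ext i j; exact i.elim0⟩
      rw [Subsingleton.elim M 0, norm_zero]
      norm_num
    · apply Stmt9Aux.opnorm_lt_one hN
      have hPs : 1 - Mᵀ * M = Sᵀ * Rb * S := by
        rw [hMt, hM, hSt, hRb, ← hSS]
        noncomm_ring
      rw [hPs]
      exact Stmt9Aux.posdef_conj hR hSpd.isUnit
  · rw [t1, t2, ← Stmt9Aux.ct_eq, l2_opNorm_conjTranspose_mul_self, pow_two]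
end

section
/- (Lemma 6.1.) Let A ∈ ℝ^{N×N} be symmetric positive definite, ξ = 𝟙_N the all-ones vector, η = ξᵀAξ, and let R₁ ∈ ℝ^{N×N} be such that R̄ := R₁ᵀ + R₁ − R₁ᵀAR₁ is symmetric positive definite. Set R̂₁ := η^{-1}ξξᵀ + R₁(I − η^{-1}Aξξᵀ). Let P ∈ ℝ^{N×N_c} have full column rank, A₂ := PᵀAP, let B₂ ∈ ℝ^{N_c×N_c}, and define B̄ by I − B̄A = (I − R̂₁ᵀA)(I − P B₂ᵀ Pᵀ A)(I − P B₂ Pᵀ A)(I − R̂₁A), and, for an integer θ ≥ 1, define B₁ by I − B₁A = (I − R̂₁ᵀA)^{θ−1}(I − B̄A)(I − R̂₁A)^{θ−1}. Then ‖I − R̂₁A‖_A < 1, ‖I − R̂₁ᵀA‖_A < 1, and ‖I − B₁A‖_A ≤ ‖I − B̄A‖_A. -/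
open Matrix

namespace Stmt10Aux

variable {N : ℕ}

lemma dself (v : Fin N → ℝ) : 0 ≤ v ⬝ᵥ v :=
  Finset.sum_nonneg fun _ _ => mul_self_nonneg _

/-- Cauchy–Schwarz for the dot product. -/
lemma dcs (u v : Fin N → ℝ) : (u ⬝ᵥ v) ^ 2 ≤ (u ⬝ᵥ u) * (v ⬝ᵥ v) := by
  simpa [dotProduct, sq] using Finset.sum_mul_sq_le_sq_mul_sq Finset.univ u v

lemma qnonneg {A : Matrix (Fin N) (Fin N) ℝ} (hA : A.PosSemidef) (v : Fin N → ℝ) :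
    0 ≤ v ⬝ᵥ A *ᵥ v := by
  simpa using hA.dotProduct_mulVec_nonneg v

lemma qpos {A : Matrix (Fin N) (Fin N) ℝ} (hA : A.PosDef) {v : Fin N → ℝ} (hv : v ≠ 0) :
    0 < v ⬝ᵥ A *ᵥ v := by
  simpa using hA.dotProduct_mulVec_pos hv

/-- Cauchy–Schwarz for a positive semidefinite bilinear form. -/
lemma qcs {A : Matrix (Fin N) (Fin N) ℝ} (hA : A.PosSemidef) (u v : Fin N → ℝ) :
    (u ⬝ᵥ A *ᵥ v) ^ 2 ≤ (u ⬝ᵥ A *ᵥ u) * (v ⬝ᵥ A *ᵥ v) := by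
  obtain ⟨B, rfl⟩ : ∃ B : Matrix (Fin N) (Fin N) ℝ, A = Bᴴ * B := by
    open scoped MatrixOrder in exact CStarAlgebra.nonneg_iff_eq_star_mul_self.mp hA.nonneg
  have h : ∀ x y : Fin N → ℝ, x ⬝ᵥ (Bᴴ * B) *ᵥ y = (B *ᵥ x) ⬝ᵥ (B *ᵥ y) := by
    intro x y
    rw [← mulVec_mulVec, dotProduct_mulVec, conjTranspose_eq_transpose_of_trivial,
      vecMul_transpose]
  rw [h, h, h]
  exact dcs _ _

/-- conjugation of quadratic forms -/
lemma qconj (A M : Matrix (Fin N) (Fin N) ℝ) (v : Fin N → ℝ) :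
    (M *ᵥ v) ⬝ᵥ A *ᵥ (M *ᵥ v) = v ⬝ᵥ (Mᵀ * A * M) *ᵥ v := by
  rw [Matrix.mul_assoc, ← mulVec_mulVec, dotProduct_mulVec v, vecMul_transpose,
    ← mulVec_mulVec]

/-- crude upper bound for a quadratic form -/
lemma qbound (S : Matrix (Fin N) (Fin N) ℝ) :
    ∃ C : ℝ, 0 ≤ C ∧ ∀ v : Fin N → ℝ, v ⬝ᵥ S *ᵥ v ≤ C * (v ⬝ᵥ v) := by
  refine ⟨∑ i, ∑ j, |S i j|, by positivity, fun v => ?_⟩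
  have hvv : ∀ i j : Fin N, |v i| * |v j| ≤ v ⬝ᵥ v := by
    intro i j
    have hi : v i ^ 2 ≤ v ⬝ᵥ v := by
      simpa [dotProduct, sq] using
        Finset.single_le_sum (f := fun k => v k * v k)
          (fun k _ => mul_self_nonneg (v k)) (Finset.mem_univ i)
    have hj : v j ^ 2 ≤ v ⬝ᵥ v := by
      simpa [dotProduct, sq] using
        Finset.single_le_sum (f := fun k => v k * v k)
          (fun k _ => mul_self_nonneg (v k)) (Finset.mem_univ j)
    nlinarith [sq_nonneg (|v i| - |v j|), sq_abs (v i), sq_abs (v j), abs_nonneg (v i),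
      abs_nonneg (v j)]
  have expand : v ⬝ᵥ S *ᵥ v = ∑ i, ∑ j, v i * (S i j * v j) := by
    simp [dotProduct, mulVec, Finset.mul_sum]
  rw [expand, Finset.sum_mul]
  refine Finset.sum_le_sum fun i _ => ?_
  rw [Finset.sum_mul]
  refine Finset.sum_le_sum fun j _ => ?_
  calc v i * (S i j * v j) ≤ |v i * (S i j * v j)| := le_abs_self _
    _ = |S i j| * (|v i| * |v j|) := by rw [abs_mul, abs_mul]; ring
    _ ≤ |S i j| * (v ⬝ᵥ v) := mul_le_mul_of_nonneg_left (hvv i j) (abs_nonneg _)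

/-- coercivity of a positive definite quadratic form -/
lemma coercive {A : Matrix (Fin N) (Fin N) ℝ} (hA : A.PosDef) :
    ∃ ε : ℝ, 0 < ε ∧ ∀ v : Fin N → ℝ, ε * (v ⬝ᵥ v) ≤ v ⬝ᵥ A *ᵥ v := by
  obtain ⟨C, hC0, hC⟩ := qbound (N := N) A⁻¹
  refine ⟨(C + 1)⁻¹, by positivity, fun v => ?_⟩
  by_cases hv : v = 0
  · simp [hv]
  have h1 : A *ᵥ (A⁻¹ *ᵥ v) = v := by
    rw [mulVec_mulVec, Matrix.mul_nonsing_inv _ hA.det_pos.ne'.isUnit, one_mulVec]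
  have key : (v ⬝ᵥ v) ^ 2 ≤ (v ⬝ᵥ A *ᵥ v) * ((A⁻¹ *ᵥ v) ⬝ᵥ v) := by
    have := qcs hA.posSemidef v (A⁻¹ *ᵥ v)
    rwa [h1] at this
  have h2 : (A⁻¹ *ᵥ v) ⬝ᵥ v ≤ (C + 1) * (v ⬝ᵥ v) := by
    rw [dotProduct_comm]
    have := hC v
    have hvv : 0 ≤ v ⬝ᵥ v := dself v
    nlinarith
  have hq : 0 < v ⬝ᵥ A *ᵥ v := qpos hA hv
  have hd : 0 < v ⬝ᵥ v := by
    rcases (dself v).lt_or_eq with h | h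
    · exact h
    · exact absurd (dotProduct_self_eq_zero.mp h.symm) hv
  rw [inv_mul_le_iff₀ (by positivity)]
  nlinarith

/-- `ε‖w‖² ≤ wᵀAw` implies `ε wᵀAw ≤ ‖Aw‖²`. -/
lemma sq_coercive {A : Matrix (Fin N) (Fin N) ℝ} (hA : A.PosSemidef) {ε : ℝ} (hε : 0 < ε)
    (h : ∀ v : Fin N → ℝ, ε * (v ⬝ᵥ v) ≤ v ⬝ᵥ A *ᵥ v) (w : Fin N → ℝ) :
    ε * (w ⬝ᵥ A *ᵥ w) ≤ (A *ᵥ w) ⬝ᵥ (A *ᵥ w) := by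
  have ha : 0 ≤ w ⬝ᵥ A *ᵥ w := qnonneg hA w
  have hb : 0 ≤ (A *ᵥ w) ⬝ᵥ (A *ᵥ w) := dself _
  have hcs : (w ⬝ᵥ A *ᵥ w) ^ 2 ≤ (w ⬝ᵥ w) * ((A *ᵥ w) ⬝ᵥ (A *ᵥ w)) := dcs w (A *ᵥ w)
  have hc := h w
  rcases ha.lt_or_eq with h0 | h0
  · nlinarith
  · rw [← h0]
    simpa using hb

/-- Transfer of a quadratic contraction bound to the `A`-adjoint. -/
lemma adjoint_contr {A E F : Matrix (Fin N) (Fin N) ℝ} (hA : A.PosSemidef)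
    (hAF : A * F = Eᵀ * A) {γ : ℝ} (hγ : 0 ≤ γ)
    (h : ∀ v : Fin N → ℝ, (E *ᵥ v) ⬝ᵥ A *ᵥ (E *ᵥ v) ≤ γ * (v ⬝ᵥ A *ᵥ v))
    (v : Fin N → ℝ) : (F *ᵥ v) ⬝ᵥ A *ᵥ (F *ᵥ v) ≤ γ * (v ⬝ᵥ A *ᵥ v) := by
  have key : (F *ᵥ v) ⬝ᵥ A *ᵥ (F *ᵥ v) = (E *ᵥ (F *ᵥ v)) ⬝ᵥ (A *ᵥ v) := by
    calc (F *ᵥ v) ⬝ᵥ A *ᵥ (F *ᵥ v) = (F *ᵥ v) ⬝ᵥ (A * F) *ᵥ v := by rw [← mulVec_mulVec]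
      _ = (F *ᵥ v) ⬝ᵥ Eᵀ *ᵥ (A *ᵥ v) := by rw [hAF, ← mulVec_mulVec]
      _ = (E *ᵥ (F *ᵥ v)) ⬝ᵥ (A *ᵥ v) := by rw [dotProduct_mulVec, vecMul_transpose]
  have hcs : ((E *ᵥ (F *ᵥ v)) ⬝ᵥ A *ᵥ v) ^ 2
      ≤ ((E *ᵥ (F *ᵥ v)) ⬝ᵥ A *ᵥ (E *ᵥ (F *ᵥ v))) * (v ⬝ᵥ A *ᵥ v) :=
    qcs hA (E *ᵥ (F *ᵥ v)) v
  have h1 := h (F *ᵥ v)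
  have ha : 0 ≤ (F *ᵥ v) ⬝ᵥ A *ᵥ (F *ᵥ v) := qnonneg hA _
  have hqv : 0 ≤ v ⬝ᵥ A *ᵥ v := qnonneg hA v
  rcases ha.lt_or_eq with h0 | h0
  · nlinarith
  · rw [← h0]; exact mul_nonneg hγ hqv

/-- Powers of a contraction are contractions. -/
lemma pow_contr {A M : Matrix (Fin N) (Fin N) ℝ}
    (h : ∀ v : Fin N → ℝ, (M *ᵥ v) ⬝ᵥ A *ᵥ (M *ᵥ v) ≤ v ⬝ᵥ A *ᵥ v) (k : ℕ)
    (v : Fin N → ℝ) : (M ^ k *ᵥ v) ⬝ᵥ A *ᵥ (M ^ k *ᵥ v) ≤ v ⬝ᵥ A *ᵥ v := by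
  induction k generalizing v with
  | zero => simp
  | succ k ih =>
    have hs : M ^ (k + 1) *ᵥ v = M ^ k *ᵥ (M *ᵥ v) := by
      rw [mulVec_mulVec, ← pow_succ]
    rw [hs]
    exact le_trans (ih (M *ᵥ v)) (h v)

lemma transpose_eq {A : Matrix (Fin N) (Fin N) ℝ} (hA : A.IsHermitian) : Aᵀ = A := by
  rw [← conjTranspose_eq_transpose_of_trivial]; exact hA

lemma qsymm {A : Matrix (Fin N) (Fin N) ℝ} (hA : A.IsHermitian) (u v : Fin N → ℝ) :
    u ⬝ᵥ A *ᵥ v = v ⬝ᵥ A *ᵥ u := by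
  rw [dotProduct_mulVec u A v, ← transpose_eq hA, vecMul_transpose, transpose_eq hA,
    dotProduct_comm]

lemma vmv_mulVec (ξ u : Fin N → ℝ) : vecMulVec ξ ξ *ᵥ u = (ξ ⬝ᵥ u) • ξ := by
  ext i
  simp only [mulVec, vecMulVec_apply, dotProduct, Pi.smul_apply, smul_eq_mul, Finset.sum_mul]
  exact Finset.sum_congr rfl fun j _ => by ring

lemma factorization (A R₁ : Matrix (Fin N) (Fin N) ℝ) (ξ : Fin N → ℝ) (η : ℝ) :
    (1 : Matrix (Fin N) (Fin N) ℝ)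
        - (η⁻¹ • vecMulVec ξ ξ + R₁ * (1 - η⁻¹ • (A * vecMulVec ξ ξ))) * A
      = (1 - R₁ * A) * (1 - η⁻¹ • (vecMulVec ξ ξ * A)) := by
  simp only [Matrix.add_mul, Matrix.sub_mul, Matrix.mul_sub, Matrix.mul_one, Matrix.one_mul,
    smul_mul_assoc, mul_smul_comm, smul_sub, smul_add, Matrix.mul_assoc]
  abel

lemma GAG (A R₁ : Matrix (Fin N) (Fin N) ℝ) (hA : Aᵀ = A) :
    (1 - R₁ * A)ᵀ * A * (1 - R₁ * A) = A - A * (R₁ᵀ + R₁ - R₁ᵀ * A * R₁) * A := by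
  rw [transpose_sub, transpose_one, transpose_mul, hA]
  simp only [Matrix.sub_mul, Matrix.mul_sub, Matrix.add_mul, Matrix.mul_add, Matrix.one_mul,
    Matrix.mul_one, Matrix.mul_assoc]
  abel

/-- Core contraction estimate for the modified smoother. -/
lemma contraction {A R₁ : Matrix (Fin N) (Fin N) ℝ} (hA : A.PosDef)
    (hR : (R₁ᵀ + R₁ - R₁ᵀ * A * R₁).PosDef) (ξ : Fin N → ℝ) (hξ : ξ ≠ 0) :
    ∃ γ : ℝ, 0 ≤ γ ∧ γ < 1 ∧ ∀ v : Fin N → ℝ,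
      (((1 : Matrix (Fin N) (Fin N) ℝ) -
          ((ξ ⬝ᵥ A *ᵥ ξ)⁻¹ • vecMulVec ξ ξ +
            R₁ * (1 - (ξ ⬝ᵥ A *ᵥ ξ)⁻¹ • (A * vecMulVec ξ ξ))) * A) *ᵥ v) ⬝ᵥ
        A *ᵥ (((1 : Matrix (Fin N) (Fin N) ℝ) -
          ((ξ ⬝ᵥ A *ᵥ ξ)⁻¹ • vecMulVec ξ ξ +
            R₁ * (1 - (ξ ⬝ᵥ A *ᵥ ξ)⁻¹ • (A * vecMulVec ξ ξ))) * A) *ᵥ v)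
      ≤ γ * (v ⬝ᵥ A *ᵥ v) := by
  set η : ℝ := ξ ⬝ᵥ A *ᵥ ξ with hη_def
  have hη : 0 < η := qpos hA hξ
  obtain ⟨εA, hεA, hcA⟩ := coercive hA
  obtain ⟨εR, hεR, hcR⟩ := coercive hR
  set δ : ℝ := min (εR * εA) 1 with hδ_def
  have hδ0 : 0 < δ := lt_min (by positivity) one_pos
  have hδ1 : δ ≤ 1 := min_le_right _ _
  refine ⟨1 - δ, by linarith, by linarith, fun v => ?_⟩
  set G : Matrix (Fin N) (Fin N) ℝ := 1 - R₁ * A with hG_def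
  set s : ℝ := ξ ⬝ᵥ A *ᵥ v with hs_def
  set w : Fin N → ℝ := v - (η⁻¹ * s) • ξ with hw_def
  have hfac := factorization A R₁ ξ η
  have hproj : (1 - η⁻¹ • (vecMulVec ξ ξ * A)) *ᵥ v = w := by
    rw [sub_mulVec, one_mulVec, smul_mulVec, ← mulVec_mulVec, vmv_mulVec, smul_smul,
      hw_def, hs_def]
  have hEv : ((1 : Matrix (Fin N) (Fin N) ℝ) -
      (η⁻¹ • vecMulVec ξ ξ + R₁ * (1 - η⁻¹ • (A * vecMulVec ξ ξ))) * A) *ᵥ v = G *ᵥ w := by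
    rw [hfac, ← mulVec_mulVec, hproj]
  rw [hEv]
  have hsym : v ⬝ᵥ A *ᵥ ξ = s := by rw [hs_def, qsymm hA.1]
  have hqw : w ⬝ᵥ A *ᵥ w = v ⬝ᵥ A *ᵥ v - η⁻¹ * s ^ 2 := by
    rw [hw_def]
    simp only [mulVec_sub, mulVec_smul, dotProduct_sub, sub_dotProduct, dotProduct_smul,
      smul_dotProduct, smul_eq_mul]
    rw [hsym, ← hs_def, ← hη_def]
    field_simp
    ring
  have hw_le : w ⬝ᵥ A *ᵥ w ≤ v ⬝ᵥ A *ᵥ v := by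
    rw [hqw]
    have : 0 ≤ η⁻¹ * s ^ 2 := by positivity
    linarith
  have hqG : (G *ᵥ w) ⬝ᵥ A *ᵥ (G *ᵥ w)
      = w ⬝ᵥ A *ᵥ w - (A *ᵥ w) ⬝ᵥ (R₁ᵀ + R₁ - R₁ᵀ * A * R₁) *ᵥ (A *ᵥ w) := by
    rw [qconj, hG_def, GAG A R₁ (transpose_eq hA.1), sub_mulVec, dotProduct_sub]
    congr 1
    rw [qconj, transpose_eq hA.1]
  have hRu := hcR (A *ᵥ w)
  have hAA := sq_coercive hA.posSemidef hεA hcA w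
  have hqw_nonneg : 0 ≤ w ⬝ᵥ A *ᵥ w := qnonneg hA.posSemidef w
  have hstep2 : (G *ᵥ w) ⬝ᵥ A *ᵥ (G *ᵥ w) ≤ (1 - δ) * (w ⬝ᵥ A *ᵥ w) := by
    rw [hqG]
    have h1 : δ * (w ⬝ᵥ A *ᵥ w) ≤ εR * εA * (w ⬝ᵥ A *ᵥ w) :=
      mul_le_mul_of_nonneg_right (min_le_left _ _) hqw_nonneg
    nlinarith
  calc (G *ᵥ w) ⬝ᵥ A *ᵥ (G *ᵥ w) ≤ (1 - δ) * (w ⬝ᵥ A *ᵥ w) := hstep2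
    _ ≤ (1 - δ) * (v ⬝ᵥ A *ᵥ v) := mul_le_mul_of_nonneg_left hw_le (by linarith)

-- `aOpNorm` interface

lemma anorm_sq {A : Matrix (Fin N) (Fin N) ℝ} (hA : A.PosSemidef) (v : Fin N → ℝ) :
    anorm A v ^ 2 = v ⬝ᵥ A *ᵥ v :=
  Real.sq_sqrt (qnonneg hA v)

lemma anorm_pos {A : Matrix (Fin N) (Fin N) ℝ} (hA : A.PosDef) {v : Fin N → ℝ} (hv : v ≠ 0) :
    0 < anorm A v :=
  Real.sqrt_pos.mpr (qpos hA hv)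

lemma ratio_le {A M : Matrix (Fin N) (Fin N) ℝ} (hA : A.PosDef) {γ : ℝ} (hγ : 0 ≤ γ)
    (h : ∀ v : Fin N → ℝ, (M *ᵥ v) ⬝ᵥ A *ᵥ (M *ᵥ v) ≤ γ * (v ⬝ᵥ A *ᵥ v)) :
    ∀ t ∈ {t | ∃ v : Fin N → ℝ, v ≠ 0 ∧ t = anorm A (M *ᵥ v) / anorm A v},
      t ≤ Real.sqrt γ := by
  rintro t ⟨v, hv, rfl⟩
  rw [div_le_iff₀ (anorm_pos hA hv)]
  rw [anorm, anorm, ← Real.sqrt_mul hγ]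
  exact Real.sqrt_le_sqrt (h v)

lemma aOpNorm_le_sqrt {A M : Matrix (Fin N) (Fin N) ℝ} (hA : A.PosDef) {γ : ℝ} (hγ : 0 ≤ γ)
    (h : ∀ v : Fin N → ℝ, (M *ᵥ v) ⬝ᵥ A *ᵥ (M *ᵥ v) ≤ γ * (v ⬝ᵥ A *ᵥ v)) :
    aOpNorm A M ≤ Real.sqrt γ :=
  Real.sSup_le (ratio_le hA hγ h) (Real.sqrt_nonneg γ)

lemma aOpNorm_nonneg (A M : Matrix (Fin N) (Fin N) ℝ) : 0 ≤ aOpNorm A M := by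
  apply Real.sSup_nonneg
  rintro t ⟨v, hv, rfl⟩
  exact div_nonneg (Real.sqrt_nonneg _) (Real.sqrt_nonneg _)

lemma genBound {A : Matrix (Fin N) (Fin N) ℝ} (hA : A.PosDef)
    (M : Matrix (Fin N) (Fin N) ℝ) :
    ∃ C : ℝ, 0 ≤ C ∧ ∀ v : Fin N → ℝ,
      (M *ᵥ v) ⬝ᵥ A *ᵥ (M *ᵥ v) ≤ C * (v ⬝ᵥ A *ᵥ v) := by
  obtain ⟨C₀, hC₀, hC⟩ := qbound (Mᵀ * A * M)
  obtain ⟨ε, hε, hεc⟩ := coercive hA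
  refine ⟨C₀ / ε, by positivity, fun v => ?_⟩
  have h1 : (M *ᵥ v) ⬝ᵥ A *ᵥ (M *ᵥ v) ≤ C₀ * (v ⬝ᵥ v) := by rw [qconj]; exact hC v
  have h2 := hεc v
  rw [div_mul_eq_mul_div, le_div_iff₀ hε]
  nlinarith

lemma anorm_mulVec_le {A : Matrix (Fin N) (Fin N) ℝ} (hA : A.PosDef)
    (M : Matrix (Fin N) (Fin N) ℝ) (v : Fin N → ℝ) :
    anorm A (M *ᵥ v) ≤ aOpNorm A M * anorm A v := by
  by_cases hv : v = 0
  · simp [hv, anorm]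
  obtain ⟨C, hC0, hC⟩ := genBound hA M
  have hbdd : BddAbove {t | ∃ v : Fin N → ℝ, v ≠ 0 ∧ t = anorm A (M *ᵥ v) / anorm A v} :=
    ⟨Real.sqrt C, ratio_le hA hC0 hC⟩
  have ht : anorm A (M *ᵥ v) / anorm A v
      ∈ {t | ∃ v : Fin N → ℝ, v ≠ 0 ∧ t = anorm A (M *ᵥ v) / anorm A v} := ⟨v, hv, rfl⟩
  have := le_csSup hbdd ht
  rw [div_le_iff₀ (anorm_pos hA hv)] at this
  exact this

lemma q_le_opnorm_sq {A : Matrix (Fin N) (Fin N) ℝ} (hA : A.PosDef)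
    (M : Matrix (Fin N) (Fin N) ℝ) (v : Fin N → ℝ) :
    (M *ᵥ v) ⬝ᵥ A *ᵥ (M *ᵥ v) ≤ (aOpNorm A M) ^ 2 * (v ⬝ᵥ A *ᵥ v) := by
  have h := anorm_mulVec_le hA M v
  calc (M *ᵥ v) ⬝ᵥ A *ᵥ (M *ᵥ v) = anorm A (M *ᵥ v) ^ 2 := (anorm_sq hA.posSemidef _).symm
    _ ≤ (aOpNorm A M * anorm A v) ^ 2 := by
        apply pow_le_pow_left₀ (Real.sqrt_nonneg _) h
    _ = (aOpNorm A M) ^ 2 * (v ⬝ᵥ A *ᵥ v) := by rw [mul_pow, anorm_sq hA.posSemidef]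

end Stmt10Aux

open Stmt10Aux in
/-- Lemma 6.1. With `ξ = 𝟙_N`, `η = ξᵀAξ`, `R̄ = R₁ᵀ+R₁−R₁ᵀAR₁` SPD,
`R̂₁ = η⁻¹ξξᵀ + R₁(I − η⁻¹Aξξᵀ)`, `P` of full column rank, `B̄` defined by
`I − B̄A = (I − R̂₁ᵀA)(I − PB₂ᵀPᵀA)(I − PB₂PᵀA)(I − R̂₁A)` and, for `θ ≥ 1`, `B₁` defined
by `I − B₁A = (I − R̂₁ᵀA)^{θ−1}(I − B̄A)(I − R̂₁A)^{θ−1}`, one has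
`‖I − R̂₁A‖_A < 1`, `‖I − R̂₁ᵀA‖_A < 1` and `‖I − B₁A‖_A ≤ ‖I − B̄A‖_A`. -/
theorem stmt10 {N Nc : ℕ} (A : Matrix (Fin N) (Fin N) ℝ) (hA : A.PosDef)
    (R₁ : Matrix (Fin N) (Fin N) ℝ) (hR : (R₁ᵀ + R₁ - R₁ᵀ * A * R₁).PosDef)
    (P : Matrix (Fin N) (Fin Nc) ℝ) (hP : Function.Injective fun x : Fin Nc → ℝ => P *ᵥ x)
    (B₂ : Matrix (Fin Nc) (Fin Nc) ℝ) (Bbar B₁ : Matrix (Fin N) (Fin N) ℝ)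
    (θ : ℕ) (hθ : 1 ≤ θ) :
    let ξ : Fin N → ℝ := fun _ => 1
    let η := ξ ⬝ᵥ (A *ᵥ ξ)
    let Rhat := η⁻¹ • vecMulVec ξ ξ + R₁ * (1 - η⁻¹ • (A * vecMulVec ξ ξ))
    1 - Bbar * A =
        (1 - Rhatᵀ * A) * (1 - P * B₂ᵀ * Pᵀ * A) * (1 - P * B₂ * Pᵀ * A) * (1 - Rhat * A) →
      1 - B₁ * A = (1 - Rhatᵀ * A) ^ (θ - 1) * (1 - Bbar * A) * (1 - Rhat * A) ^ (θ - 1) →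
      aOpNorm A (1 - Rhat * A) < 1 ∧ aOpNorm A (1 - Rhatᵀ * A) < 1 ∧
        aOpNorm A (1 - B₁ * A) ≤ aOpNorm A (1 - Bbar * A) := by
  intro ξ η Rhat h1 h2
  rcases Nat.eq_zero_or_pos N with hN | hN
  · -- trivial case `N = 0`
    subst hN
    have hzero : ∀ M : Matrix (Fin 0) (Fin 0) ℝ, aOpNorm A M = 0 := by
      intro M
      have : {t | ∃ v : Fin 0 → ℝ, v ≠ 0 ∧ t = anorm A (M *ᵥ v) / anorm A v} = ∅ := by
        ext t
        simp only [Set.mem_setOf_eq, Set.mem_empty_iff_false, iff_false, not_exists]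
        intro v hv
        exact absurd (Subsingleton.elim v 0) hv.1
      rw [aOpNorm, this, Real.sSup_empty]
    rw [hzero, hzero, hzero, hzero]
    norm_num
  -- main case
  have hξ : ξ ≠ 0 := by
    intro h
    have := congrFun h ⟨0, hN⟩
    simpa [ξ] using this
  obtain ⟨γ, hγ0, hγ1, hcontr⟩ := contraction hA hR ξ hξ
  have hE : ∀ v : Fin N → ℝ,
      ((1 - Rhat * A) *ᵥ v) ⬝ᵥ A *ᵥ ((1 - Rhat * A) *ᵥ v) ≤ γ * (v ⬝ᵥ A *ᵥ v) :=
    fun v => hcontr v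
  have hAF : A * (1 - Rhatᵀ * A) = (1 - Rhat * A)ᵀ * A := by
    simp only [transpose_sub, transpose_one, transpose_mul, transpose_eq hA.1,
      Matrix.mul_sub, Matrix.sub_mul, Matrix.mul_one, Matrix.one_mul, Matrix.mul_assoc]
  have hF : ∀ v : Fin N → ℝ,
      ((1 - Rhatᵀ * A) *ᵥ v) ⬝ᵥ A *ᵥ ((1 - Rhatᵀ * A) *ᵥ v) ≤ γ * (v ⬝ᵥ A *ᵥ v) :=
    adjoint_contr hA.posSemidef hAF hγ0 hE
  have hsqrt : Real.sqrt γ < 1 := by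
    rw [show (1 : ℝ) = Real.sqrt 1 by rw [Real.sqrt_one]]
    exact Real.sqrt_lt_sqrt hγ0 hγ1
  refine ⟨lt_of_le_of_lt (aOpNorm_le_sqrt hA hγ0 hE) hsqrt,
    lt_of_le_of_lt (aOpNorm_le_sqrt hA hγ0 hF) hsqrt, ?_⟩
  set β := aOpNorm A (1 - Bbar * A) with hβ_def
  have hβ0 : 0 ≤ β := aOpNorm_nonneg A _
  have hmid := q_le_opnorm_sq hA (1 - Bbar * A)
  have hEc : ∀ v : Fin N → ℝ,
      ((1 - Rhat * A) *ᵥ v) ⬝ᵥ A *ᵥ ((1 - Rhat * A) *ᵥ v) ≤ v ⬝ᵥ A *ᵥ v := by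
    intro v
    have := hE v
    nlinarith [qnonneg hA.posSemidef v]
  have hFc : ∀ v : Fin N → ℝ,
      ((1 - Rhatᵀ * A) *ᵥ v) ⬝ᵥ A *ᵥ ((1 - Rhatᵀ * A) *ᵥ v) ≤ v ⬝ᵥ A *ᵥ v := by
    intro v
    have := hF v
    nlinarith [qnonneg hA.posSemidef v]
  have hB1 : ∀ v : Fin N → ℝ,
      ((1 - B₁ * A) *ᵥ v) ⬝ᵥ A *ᵥ ((1 - B₁ * A) *ᵥ v) ≤ β ^ 2 * (v ⬝ᵥ A *ᵥ v) := by
    intro v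
    rw [h2, ← mulVec_mulVec, ← mulVec_mulVec]
    calc ((1 - Rhatᵀ * A) ^ (θ - 1) *ᵥ ((1 - Bbar * A) *ᵥ ((1 - Rhat * A) ^ (θ - 1) *ᵥ v))) ⬝ᵥ
          A *ᵥ ((1 - Rhatᵀ * A) ^ (θ - 1) *ᵥ ((1 - Bbar * A) *ᵥ ((1 - Rhat * A) ^ (θ - 1) *ᵥ v)))
        ≤ ((1 - Bbar * A) *ᵥ ((1 - Rhat * A) ^ (θ - 1) *ᵥ v)) ⬝ᵥ
            A *ᵥ ((1 - Bbar * A) *ᵥ ((1 - Rhat * A) ^ (θ - 1) *ᵥ v)) :=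
          pow_contr hFc (θ - 1) _
      _ ≤ β ^ 2 * (((1 - Rhat * A) ^ (θ - 1) *ᵥ v) ⬝ᵥ A *ᵥ ((1 - Rhat * A) ^ (θ - 1) *ᵥ v)) :=
          hmid _
      _ ≤ β ^ 2 * (v ⬝ᵥ A *ᵥ v) :=
          mul_le_mul_of_nonneg_left (pow_contr hEc (θ - 1) v) (by positivity)
  have := aOpNorm_le_sqrt hA (by positivity : (0:ℝ) ≤ β ^ 2) hB1
  rwa [Real.sqrt_sq hβ0] at this
end

section
/- (Lemma 6.3.) Under the two-level setting — A ∈ ℝ^{N×N} symmetric positive definite, ξ = 𝟙_N, η = ξᵀAξ, R₁ with R̄ := R₁ᵀ + R₁ − R₁ᵀAR₁ symmetric positive definite, P ∈ ℝ^{N×N_c} of full column rank, A₂ := PᵀAP, B₂ with B̄₂ := B₂ᵀ + B₂ − B₂ᵀA₂B₂ symmetric positive definite, and c₀ = sup over ‖v‖_A = 1 of the infimum over decompositions x₁ξ + x₂ + Px₃ = v of η(x₁ + η^{-1}ξᵀA(x₂+Px₃))² + ‖x₂ + R₁ᵀAPx₃‖²_{R̄^{-1}} + ‖x₃‖²_{B̄₂^{-1}}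 — one has c₀ ≤ 1 + χ₁, where V_r := { v ∈ ℝ^N : ⟨Av, ξ⟩ = 0 } and χ₁ := sup over v_r ∈ V_r with ‖v_r‖_A = 1 of the infimum, over all (x₂, x₃) ∈ ℝ^N × ℝ^{N_c} with x₂ + Px₃ = v_r, of ‖x₂ + R₁ᵀAPx₃‖²_{R̄^{-1}} + ‖x₃‖²_{B̄₂^{-1}}. -/
open Matrix

lemma quad_cont {n : ℕ} (M : Matrix (Fin n) (Fin n) ℝ) :
    Continuous fun x : Fin n → ℝ => x ⬝ᵥ (M *ᵥ x) := by
  simp only [dotProduct, Matrix.mulVec]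
  exact continuous_finset_sum _ fun i _ =>
    (continuous_apply i).mul (continuous_finset_sum _ fun j _ =>
      (continuous_const.mul (continuous_apply j)))

lemma quad_smul {n : ℕ} (M : Matrix (Fin n) (Fin n) ℝ) (x : Fin n → ℝ) (t : ℝ) :
    (t • x) ⬝ᵥ (M *ᵥ (t • x)) = t^2 * (x ⬝ᵥ (M *ᵥ x)) := by
  rw [mulVec_smul, smul_dotProduct, dotProduct_smul, smul_eq_mul, smul_eq_mul]; ring

lemma dot_mulVec_symm {n : ℕ} {A : Matrix (Fin n) (Fin n) ℝ} (hA : Aᵀ = A)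
    (x y : Fin n → ℝ) : x ⬝ᵥ (A *ᵥ y) = y ⬝ᵥ (A *ᵥ x) := by
  conv_rhs => rw [← hA, mulVec_transpose]
  rw [dotProduct_mulVec, dotProduct_comm]

lemma quad_bound {n : ℕ} (M A : Matrix (Fin n) (Fin n) ℝ) (hM : M.PosSemidef) (hA : A.PosDef) :
    ∃ c : ℝ, ∀ x : Fin n → ℝ, x ⬝ᵥ (M *ᵥ x) ≤ c * (x ⬝ᵥ (A *ᵥ x)) := by
  rcases isEmpty_or_nonempty (Fin n) with h | h
  · exact ⟨0, fun x => by simp [Subsingleton.elim x 0, dotProduct]⟩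
  · have hsne : (Metric.sphere (0 : Fin n → ℝ) 1).Nonempty := by
      obtain ⟨x, hx⟩ := NormedSpace.exists_lt_norm ℝ (Fin n → ℝ) 0
      refine ⟨‖x‖⁻¹ • x, ?_⟩
      simp [norm_smul, abs_of_pos (inv_pos.2 hx), inv_mul_cancel₀ (ne_of_gt hx)]
    have hsc : IsCompact (Metric.sphere (0 : Fin n → ℝ) 1) := isCompact_sphere _ _
    obtain ⟨zg, hzg, hgmin⟩ := hsc.exists_isMinOn hsne ((quad_cont A).continuousOn)
    obtain ⟨zf, hzf, hfmax⟩ := hsc.exists_isMaxOn hsne ((quad_cont M).continuousOn)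
    have hzgne : zg ≠ 0 := by
      intro h0; simp [h0] at hzg
    have hm : 0 < zg ⬝ᵥ (A *ᵥ zg) := by simpa using hA.dotProduct_mulVec_pos hzgne
    refine ⟨(zf ⬝ᵥ (M *ᵥ zf)) / (zg ⬝ᵥ (A *ᵥ zg)), fun x => ?_⟩
    rcases eq_or_ne x 0 with rfl | hx
    · simp [dotProduct]
    · set u : Fin n → ℝ := ‖x‖⁻¹ • x with hu
      have hn : 0 < ‖x‖ := norm_pos_iff.2 hx
      have husph : u ∈ Metric.sphere (0 : Fin n → ℝ) 1 := by
        simp [hu, norm_smul, abs_of_pos (inv_pos.2 hn), inv_mul_cancel₀ hn.ne']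
      have h1 : u ⬝ᵥ (M *ᵥ u) = ‖x‖⁻¹^2 * (x ⬝ᵥ (M *ᵥ x)) := quad_smul M x ‖x‖⁻¹
      have h2 : u ⬝ᵥ (A *ᵥ u) = ‖x‖⁻¹^2 * (x ⬝ᵥ (A *ᵥ x)) := quad_smul A x ‖x‖⁻¹
      have hgu : zg ⬝ᵥ (A *ᵥ zg) ≤ u ⬝ᵥ (A *ᵥ u) := hgmin husph
      have hfu : u ⬝ᵥ (M *ᵥ u) ≤ zf ⬝ᵥ (M *ᵥ zf) := hfmax husph
      have hF : (0:ℝ) ≤ zf ⬝ᵥ (M *ᵥ zf) := by simpa using hM.dotProduct_mulVec_nonneg zf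
      have hMx : (0:ℝ) ≤ x ⬝ᵥ (M *ᵥ x) := by simpa using hM.dotProduct_mulVec_nonneg x
      have hAx : (0:ℝ) ≤ x ⬝ᵥ (A *ᵥ x) := by simpa using hA.posSemidef.dotProduct_mulVec_nonneg x
      have hinv : ‖x‖⁻¹^2 * ‖x‖^2 = 1 := by field_simp
      rw [div_mul_eq_mul_div, le_div_iff₀ hm]
      nlinarith [mul_le_mul_of_nonneg_left hgu hF, sq_nonneg ‖x‖⁻¹, sq_nonneg ‖x‖,
        mul_pos hm (mul_pos (pow_pos (inv_pos.2 hn) 2) (pow_pos hn 2))]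

/-- Lemma 6.3. Under the two-level setting, `c₀ ≤ 1 + χ₁` with `χ₁`
the analogous sup–inf over the `A`-orthogonal complement `V_r` of `span{𝟙_N}`, taken
over decompositions `x₂ + Px₃ = v_r`. -/
theorem stmt12 {N Nc : ℕ} (A : Matrix (Fin N) (Fin N) ℝ) (hA : A.PosDef)
    (R₁ : Matrix (Fin N) (Fin N) ℝ) (hR : (R₁ᵀ + R₁ - R₁ᵀ * A * R₁).PosDef)
    (P : Matrix (Fin N) (Fin Nc) ℝ) (hP : Function.Injective fun x : Fin Nc → ℝ => P *ᵥ x)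
    (B₂ : Matrix (Fin Nc) (Fin Nc) ℝ)
    (hB₂ : (B₂ᵀ + B₂ - B₂ᵀ * (Pᵀ * A * P) * B₂).PosDef) :
    let ξ : Fin N → ℝ := fun _ => 1
    let η := ξ ⬝ᵥ (A *ᵥ ξ)
    let Rbar := R₁ᵀ + R₁ - R₁ᵀ * A * R₁
    let Bbar₂ := B₂ᵀ + B₂ - B₂ᵀ * (Pᵀ * A * P) * B₂
    let K : ℝ → (Fin N → ℝ) → (Fin Nc → ℝ) → ℝ := fun x₁ x₂ x₃ =>
      η * (x₁ + η⁻¹ * (ξ ⬝ᵥ (A *ᵥ (x₂ + P *ᵥ x₃)))) ^ 2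
        + (x₂ + (R₁ᵀ * A * P) *ᵥ x₃) ⬝ᵥ (Rbar⁻¹ *ᵥ (x₂ + (R₁ᵀ * A * P) *ᵥ x₃))
        + x₃ ⬝ᵥ (Bbar₂⁻¹ *ᵥ x₃)
    let c₀ := sSup {t | ∃ v : Fin N → ℝ, anorm A v = 1 ∧
      t = sInf {s | ∃ x₁ x₂ x₃, x₁ • ξ + x₂ + P *ᵥ x₃ = v ∧ s = K x₁ x₂ x₃}}
    let χ₁ := sSup {t | ∃ v : Fin N → ℝ, (v ⬝ᵥ (A *ᵥ ξ)) = 0 ∧ anorm A v = 1 ∧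
      t = sInf {s | ∃ x₂ x₃, x₂ + P *ᵥ x₃ = v ∧
        s = (x₂ + (R₁ᵀ * A * P) *ᵥ x₃) ⬝ᵥ (Rbar⁻¹ *ᵥ (x₂ + (R₁ᵀ * A * P) *ᵥ x₃))
          + x₃ ⬝ᵥ (Bbar₂⁻¹ *ᵥ x₃)}}
    c₀ ≤ 1 + χ₁ := by
  intro ξ η Rbar Bbar₂ K c₀ χ₁
  have hAs : Aᵀ = A := by
    have := hA.1
    simpa [Matrix.IsHermitian] using this
  -- nonnegativity of the quadratic pieces
  have hRq : ∀ x : Fin N → ℝ, 0 ≤ x ⬝ᵥ (Rbar⁻¹ *ᵥ x) := fun x => by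
    simpa using hR.inv.posSemidef.dotProduct_mulVec_nonneg x
  have hBq : ∀ x : Fin Nc → ℝ, 0 ≤ x ⬝ᵥ (Bbar₂⁻¹ *ᵥ x) := fun x => by
    simpa using hB₂.inv.posSemidef.dotProduct_mulVec_nonneg x
  have hηnn : 0 ≤ η := by simpa using hA.posSemidef.dotProduct_mulVec_nonneg ξ
  have hKnn : ∀ x₁ x₂ x₃, 0 ≤ K x₁ x₂ x₃ := fun x₁ x₂ x₃ =>
    add_nonneg (add_nonneg (mul_nonneg hηnn (sq_nonneg _)) (hRq _)) (hBq _)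
  -- the quadratic functional in the χ₁-infimum
  set Q : (Fin N → ℝ) → (Fin Nc → ℝ) → ℝ := fun x₂ x₃ =>
    (x₂ + (R₁ᵀ * A * P) *ᵥ x₃) ⬝ᵥ (Rbar⁻¹ *ᵥ (x₂ + (R₁ᵀ * A * P) *ᵥ x₃))
      + x₃ ⬝ᵥ (Bbar₂⁻¹ *ᵥ x₃) with hQ
  have hQnn : ∀ x₂ x₃, 0 ≤ Q x₂ x₃ := fun x₂ x₃ => add_nonneg (hRq _) (hBq _)
  set χS : Set ℝ := {t | ∃ v : Fin N → ℝ, (v ⬝ᵥ (A *ᵥ ξ)) = 0 ∧ anorm A v = 1 ∧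
      t = sInf {s | ∃ x₂ x₃, x₂ + P *ᵥ x₃ = v ∧ s = Q x₂ x₃}} with hχS
  have hχdef : χ₁ = sSup χS := rfl
  -- χ₁ is nonnegative
  have hχSnn : ∀ t ∈ χS, 0 ≤ t := by
    rintro t ⟨v, -, -, rfl⟩
    exact Real.sInf_nonneg (by rintro s ⟨x₂, x₃, -, rfl⟩; exact hQnn _ _)
  have hχnn : 0 ≤ χ₁ := hχdef ▸ Real.sSup_nonneg hχSnn
  -- χS is bounded above
  obtain ⟨c, hc⟩ := quad_bound Rbar⁻¹ A hR.inv.posSemidef hA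
  have hχbdd : BddAbove χS := by
    refine ⟨c, ?_⟩
    rintro t ⟨v, hv0, hv1, rfl⟩
    have hv1' : v ⬝ᵥ (A *ᵥ v) = 1 := by
      have h0 : (0:ℝ) ≤ v ⬝ᵥ (A *ᵥ v) := by simpa using hA.posSemidef.dotProduct_mulVec_nonneg v
      have := congrArg (fun y => y ^ 2) hv1
      simpa [anorm, Real.sq_sqrt h0] using this
    refine csInf_le_of_le ⟨0, by rintro s ⟨x₂, x₃, -, rfl⟩; exact hQnn _ _⟩
      ⟨v, 0, by simp, rfl⟩ ?_
    have : Q v 0 = v ⬝ᵥ (Rbar⁻¹ *ᵥ v) := by simp [hQ]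
    rw [this]
    calc v ⬝ᵥ (Rbar⁻¹ *ᵥ v) ≤ c * (v ⬝ᵥ (A *ᵥ v)) := hc v
    _ = c := by rw [hv1']; ring
  -- main bound for each element of the c₀ set
  refine Real.sSup_le ?_ (by linarith)
  rintro t ⟨v, hv1, rfl⟩
  set S : Set ℝ := {s | ∃ x₁ x₂ x₃, x₁ • ξ + x₂ + P *ᵥ x₃ = v ∧ s = K x₁ x₂ x₃} with hS
  have hSbdd : BddBelow S := ⟨0, by rintro s ⟨x₁, x₂, x₃, -, rfl⟩; exact hKnn _ _ _⟩
  have hv1' : v ⬝ᵥ (A *ᵥ v) = 1 := by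
    have h0 : (0:ℝ) ≤ v ⬝ᵥ (A *ᵥ v) := by simpa using hA.posSemidef.dotProduct_mulVec_nonneg v
    have := congrArg (fun y => y ^ 2) hv1
    simpa [anorm, Real.sq_sqrt h0] using this
  have hNne : Nonempty (Fin N) := by
    rcases isEmpty_or_nonempty (Fin N) with h | h
    · exfalso; rw [show v ⬝ᵥ (A *ᵥ v) = 0 by simp [dotProduct]] at hv1'; norm_num at hv1'
    · exact h
  have hξne : ξ ≠ 0 := by
    intro h0
    have := congrFun h0 (Classical.arbitrary (Fin N))
    simp [ξ] at this
  have hη : 0 < η := by simpa using hA.dotProduct_mulVec_pos hξne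
  set d : ℝ := v ⬝ᵥ (A *ᵥ ξ) with hd
  set α : ℝ := d / η with hα
  set vr : Fin N → ℝ := v - α • ξ with hvr
  have hαη : α * η = d := by rw [hα]; field_simp
  have hvrξ : vr ⬝ᵥ (A *ᵥ ξ) = 0 := by
    rw [hvr, sub_dotProduct, smul_dotProduct, ← hd, smul_eq_mul]
    have : ξ ⬝ᵥ (A *ᵥ ξ) = η := rfl
    rw [this, hαη, sub_self]
  have hξAv : ξ ⬝ᵥ (A *ᵥ v) = d := by rw [dot_mulVec_symm hAs]
  have hξAvr : ξ ⬝ᵥ (A *ᵥ vr) = 0 := by rw [dot_mulVec_symm hAs]; exact hvrξ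
  have henergy : η * α ^ 2 + vr ⬝ᵥ (A *ᵥ vr) = 1 := by
    have hexp : vr ⬝ᵥ (A *ᵥ vr) = 1 - 2 * α * d + α ^ 2 * η := by
      rw [hvr]
      rw [mulVec_sub, mulVec_smul, dotProduct_sub, sub_dotProduct, sub_dotProduct,
        dotProduct_smul, dotProduct_smul, smul_dotProduct, smul_dotProduct]
      simp only [smul_eq_mul, ← hd, hξAv, hv1']
      have : ξ ⬝ᵥ (A *ᵥ ξ) = η := rfl
      rw [this]; ring
    rw [hexp]
    linear_combination (2 * α) * hαη
  have hvrnn : 0 ≤ vr ⬝ᵥ (A *ᵥ vr) := by simpa using hA.posSemidef.dotProduct_mulVec_nonneg vr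
  rcases eq_or_ne vr 0 with hvr0 | hvr0
  · -- v = α • ξ : use decomposition (α, 0, 0)
    have hveq : α • ξ + 0 + P *ᵥ (0 : Fin Nc → ℝ) = v := by
      rw [mulVec_zero, add_zero, add_zero]
      have := hvr0
      rw [hvr, sub_eq_zero] at this
      exact this.symm
    have hKval : K α 0 0 = η * α ^ 2 := by
      simp only [K]
      rw [mulVec_zero, add_zero, mulVec_zero, dotProduct_zero]
      simp only [zero_add, add_zero, mulVec_zero, dotProduct_zero]
      rw [mul_zero, add_zero]
    have h1 : sInf S ≤ η * α ^ 2 := by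
      refine csInf_le hSbdd ⟨α, 0, 0, hveq, hKval.symm⟩
    have : η * α ^ 2 = 1 := by
      have h0 : vr ⬝ᵥ (A *ᵥ vr) = 0 := by rw [hvr0]; simp [dotProduct]
      linarith [henergy, h0]
    linarith
  · -- main case: vr ≠ 0
    have hvrpos : 0 < vr ⬝ᵥ (A *ᵥ vr) := by simpa using hA.dotProduct_mulVec_pos hvr0
    set β : ℝ := Real.sqrt (vr ⬝ᵥ (A *ᵥ vr)) with hβ
    have hβpos : 0 < β := Real.sqrt_pos.2 hvrpos
    have hβ2 : β ^ 2 = vr ⬝ᵥ (A *ᵥ vr) := Real.sq_sqrt hvrpos.le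
    set w : Fin N → ℝ := β⁻¹ • vr with hw
    have hβw : β • w = vr := by
      rw [hw, smul_smul, mul_inv_cancel₀ hβpos.ne', one_smul]
    have hwA : w ⬝ᵥ (A *ᵥ w) = 1 := by
      rw [hw, quad_smul]
      field_simp [hβ2]
      exact hβ2.symm
    have hwnorm : anorm A w = 1 := by rw [anorm, hwA, Real.sqrt_one]
    have hwξ : w ⬝ᵥ (A *ᵥ ξ) = 0 := by
      rw [hw, smul_dotProduct, hvrξ, smul_zero]
    set Qw : Set ℝ := {s | ∃ x₂ x₃, x₂ + P *ᵥ x₃ = w ∧ s = Q x₂ x₃} with hQw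
    have hQwne : Qw.Nonempty := ⟨Q w 0, w, 0, by simp, rfl⟩
    have hQwbdd : BddBelow Qw := ⟨0, by rintro s ⟨x₂, x₃, -, rfl⟩; exact hQnn _ _⟩
    have htw_mem : sInf Qw ∈ χS := ⟨w, hwξ, hwnorm, rfl⟩
    have htw_le : sInf Qw ≤ χ₁ := hχdef ▸ le_csSup hχbdd htw_mem
    have htw_nn : 0 ≤ sInf Qw := Real.sInf_nonneg (by rintro s ⟨x₂, x₃, -, rfl⟩; exact hQnn _ _)
    -- sInf S ≤ η α² + β² q for every q ∈ Qw
    have hstep : ∀ q ∈ Qw, sInf S ≤ η * α ^ 2 + β ^ 2 * q := by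
      rintro q ⟨x₂, x₃, hx, rfl⟩
      have hsum : β • x₂ + P *ᵥ (β • x₃) = vr := by
        rw [mulVec_smul, ← smul_add, hx, hβw]
      have hdecomp : α • ξ + β • x₂ + P *ᵥ (β • x₃) = v := by
        rw [add_assoc, hsum, hvr]
        abel
      have hKval : K α (β • x₂) (β • x₃) = η * α ^ 2 + β ^ 2 * Q x₂ x₃ := by
        simp only [K, hQ]
        have hfirst : ξ ⬝ᵥ (A *ᵥ (β • x₂ + P *ᵥ (β • x₃))) = 0 := by
          rw [hsum]; exact hξAvr
        rw [hfirst, mul_zero, add_zero]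
        have hsecond : (β • x₂ + (R₁ᵀ * A * P) *ᵥ (β • x₃)) = β • (x₂ + (R₁ᵀ * A * P) *ᵥ x₃) := by
          rw [mulVec_smul, smul_add]
        rw [hsecond, quad_smul, quad_smul]
        ring
      exact csInf_le hSbdd ⟨α, β • x₂, β • x₃, hdecomp, hKval.symm⟩
    have hkey : sInf S ≤ η * α ^ 2 + β ^ 2 * sInf Qw := by
      have h2 : (sInf S - η * α ^ 2) / β ^ 2 ≤ sInf Qw := by
        refine le_csInf hQwne fun q hq => ?_
        have := hstep q hq
        rw [div_le_iff₀ (pow_pos hβpos 2)]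
        linarith
      rw [div_le_iff₀ (pow_pos hβpos 2)] at h2
      linarith
    have hββ : η * α ^ 2 + β ^ 2 = 1 := by rw [hβ2]; exact henergy
    have hηα2 : 0 ≤ η * α ^ 2 := mul_nonneg hη.le (sq_nonneg _)
    nlinarith [mul_le_mul_of_nonneg_left htw_le (sq_nonneg β), sq_nonneg β]
end

section
/- (Smoothing property of Gauss–Seidel, Lemma 6.4.) Let A ∈ ℝ^{N×N} be symmetric positive definite with A = D + L + Lᵀ (D diagonal part, L strictly lower-triangular part), R = (D+L)^{-1} the Gauss–Seidel smoother, and R̄ := Rᵀ + R − RᵀAR = RᵀDR. Let C_s := max over 1 ≤ i ≤ N of the number of indices j with A_{ij} ≠ 0 (the maximal number of nonzero entries in a row of A, counting the diagonal). Then R̄ is symmetric positive definite and for every v ∈ ℝ^N, ‖RᵀAv‖²_{R̄^{-1}} = ⟨D^{-1}Av, Av⟩ ≤ C_s² ‖v‖²_A; in particular ‖RᵀAv‖_{R̄^{-1}} ≤ C_s ‖v‖_A, where C_s depends only on the sparsity pattern of A. -/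
open Matrix

lemma aux_sym {n : Type*} [Fintype n] {A : Matrix n n ℝ} (hA : A.PosSemidef) (x y : n → ℝ) :
    x ⬝ᵥ (A *ᵥ y) = y ⬝ᵥ (A *ᵥ x) := by
  have h : Aᵀ = A := by simpa [Matrix.IsHermitian, conjTranspose_eq_transpose_of_trivial] using hA.1
  rw [dotProduct_mulVec, ← mulVec_transpose, h, dotProduct_comm]

lemma aux_cs {n : Type*} [Fintype n] {A : Matrix n n ℝ} (hA : A.PosSemidef) (x y : n → ℝ) :
    (x ⬝ᵥ (A *ᵥ y)) ^ 2 ≤ (x ⬝ᵥ (A *ᵥ x)) * (y ⬝ᵥ (A *ᵥ y)) := by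
  have key : ∀ t : ℝ, 0 ≤ (y ⬝ᵥ (A *ᵥ y)) * (t * t) + (2 * (x ⬝ᵥ (A *ᵥ y))) * t
      + (x ⬝ᵥ (A *ᵥ x)) := by
    intro t
    have h := hA.dotProduct_mulVec_nonneg (x + t • y)
    simp only [star_trivial, mulVec_add, mulVec_smul, dotProduct_add, add_dotProduct,
      dotProduct_smul, smul_dotProduct, smul_eq_mul] at h
    have hs := aux_sym hA x y
    rw [hs]
    rw [hs] at h
    ring_nf at h ⊢
    linarith
  have hd := discrim_le_zero key
  rw [discrim] at hd
  nlinarith [hd]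

lemma aux_sq {n : Type*} [Fintype n] [DecidableEq n] {A : Matrix n n ℝ} (hA : A.PosSemidef)
    (i j : n) : (A i j) ^ 2 ≤ A i i * A j j := by
  have h := aux_cs hA (Pi.single i 1) (Pi.single j 1)
  simpa [mulVec_single, single_dotProduct] using h

lemma aux_stepA {N : ℕ} {A : Matrix (Fin N) (Fin N) ℝ} (hA : A.PosDef) (x : Fin N → ℝ) :
    x ⬝ᵥ (A *ᵥ x) ≤
      ((Finset.univ.sup fun i => (Finset.univ.filter fun j => A i j ≠ 0).card : ℕ) : ℝ) *
        ∑ i, A i i * x i ^ 2 := by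
  set Cs : ℕ := Finset.univ.sup fun i => (Finset.univ.filter fun j => A i j ≠ 0).card with hCs
  have hd : ∀ i, 0 < A i i := fun i => by
    simpa [mulVec_single, single_dotProduct] using
      hA.dotProduct_mulVec_pos (x := Pi.single i 1) (Function.ne_iff.mpr ⟨i, by simp⟩)
  have hsymm : ∀ i j, A i j = A j i := fun i j => by
    have h : Aᵀ = A := by simpa [Matrix.IsHermitian, conjTranspose_eq_transpose_of_trivial] using hA.1
    conv_lhs => rw [← h]
    rfl
  have expand : x ⬝ᵥ (A *ᵥ x) = ∑ i, ∑ j, x i * (A i j * x j) := by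
    simp [dotProduct, mulVec, Finset.mul_sum]
  rw [expand]
  have step1 : ∀ i j, x i * (A i j * x j) ≤
      (if A i j = 0 then 0 else A i i * x i ^ 2 / 2) +
      (if A i j = 0 then 0 else A j j * x j ^ 2 / 2) := by
    intro i j
    by_cases h : A i j = 0
    · simp [h]
    · simp only [h, if_false]
      have hsq := aux_sq hA.posSemidef i j
      nlinarith [sq_nonneg (A i i * x i - A i j * x j), hd i,
        mul_nonneg (sub_nonneg.2 hsq) (sq_nonneg (x j)), sq_nonneg (x j)]
  calc ∑ i, ∑ j, x i * (A i j * x j)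
      ≤ ∑ i, ∑ j, ((if A i j = 0 then 0 else A i i * x i ^ 2 / 2) +
          (if A i j = 0 then 0 else A j j * x j ^ 2 / 2)) := by
        apply Finset.sum_le_sum; intro i _; apply Finset.sum_le_sum; intro j _; exact step1 i j
    _ = (∑ i, ∑ j, (if A i j = 0 then 0 else A i i * x i ^ 2 / 2)) +
        (∑ i, ∑ j, (if A i j = 0 then 0 else A j j * x j ^ 2 / 2)) := by
        rw [← Finset.sum_add_distrib]; congr 1; ext i; rw [← Finset.sum_add_distrib]
    _ = (∑ i, ∑ j, (if A i j = 0 then 0 else A i i * x i ^ 2 / 2)) +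
        (∑ j, ∑ i, (if A i j = 0 then 0 else A j j * x j ^ 2 / 2)) := by
        congr 1; exact Finset.sum_comm
    _ = (∑ i, ((Finset.univ.filter fun j => A i j ≠ 0).card : ℝ) * (A i i * x i ^ 2 / 2)) +
        (∑ j, ((Finset.univ.filter fun i => A j i ≠ 0).card : ℝ) * (A j j * x j ^ 2 / 2)) := by
        congr 1
        · apply Finset.sum_congr rfl; intro i _
          rw [Finset.sum_ite, Finset.sum_const_zero, zero_add, Finset.sum_const,
            nsmul_eq_mul]
        · apply Finset.sum_congr rfl; intro j _
          rw [Finset.sum_ite, Finset.sum_const_zero, zero_add, Finset.sum_const,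
            nsmul_eq_mul]
          congr 2
          apply congrArg
          apply Finset.filter_congr
          intro i _
          simp [hsymm i j]
    _ = ∑ i, ((Finset.univ.filter fun j => A i j ≠ 0).card : ℝ) * (A i i * x i ^ 2) := by
        rw [← Finset.sum_add_distrib]
        apply Finset.sum_congr rfl; intro i _; ring
    _ ≤ ∑ i, (Cs : ℝ) * (A i i * x i ^ 2) := by
        apply Finset.sum_le_sum; intro i _
        apply mul_le_mul_of_nonneg_right
        · exact_mod_cast Finset.le_sup (f := fun i => (Finset.univ.filter
            fun j => A i j ≠ 0).card) (Finset.mem_univ i)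
        · have := hd i; positivity
    _ = (Cs : ℝ) * ∑ i, A i i * x i ^ 2 := by rw [Finset.mul_sum]

lemma aux_quad {n : Type*} [Fintype n] (B M : Matrix n n ℝ) (v : n → ℝ) :
    (B *ᵥ v) ⬝ᵥ (M *ᵥ (B *ᵥ v)) = v ⬝ᵥ ((Bᵀ * M * B) *ᵥ v) := by
  conv_rhs => rw [← mulVec_mulVec, ← mulVec_mulVec, dotProduct_mulVec, vecMul_transpose]

/-- smoothing property of Gauss–Seidel, Lemma 6.4. With
`C_s = max_i #{j : A_{ij} ≠ 0}`, `R̄` is SPD and for every `v`,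
`‖RᵀAv‖²_{R̄⁻¹} = ⟨D⁻¹Av, Av⟩ ≤ C_s² ‖v‖²_A`, in particular
`‖RᵀAv‖_{R̄⁻¹} ≤ C_s ‖v‖_A`. -/
theorem stmt14 {N : ℕ} (A : Matrix (Fin N) (Fin N) ℝ) (hA : A.PosDef) :
    let D : Matrix (Fin N) (Fin N) ℝ := Matrix.diagonal fun i => A i i
    let L : Matrix (Fin N) (Fin N) ℝ := Matrix.of fun i j => if j < i then A i j else 0
    let R := (D + L)⁻¹
    let Rbar := Rᵀ + R - Rᵀ * A * R
    let Cs : ℕ := Finset.univ.sup fun i => (Finset.univ.filter fun j => A i j ≠ 0).card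
    Rbar.PosDef ∧
      ∀ v : Fin N → ℝ,
        ((Rᵀ * A) *ᵥ v) ⬝ᵥ (Rbar⁻¹ *ᵥ ((Rᵀ * A) *ᵥ v)) =
            (A *ᵥ v) ⬝ᵥ (D⁻¹ *ᵥ (A *ᵥ v)) ∧
          (A *ᵥ v) ⬝ᵥ (D⁻¹ *ᵥ (A *ᵥ v)) ≤ (Cs : ℝ) ^ 2 * (v ⬝ᵥ (A *ᵥ v)) ∧
          Real.sqrt (((Rᵀ * A) *ᵥ v) ⬝ᵥ (Rbar⁻¹ *ᵥ ((Rᵀ * A) *ᵥ v))) ≤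
            (Cs : ℝ) * Real.sqrt (v ⬝ᵥ (A *ᵥ v)) := by
  intro D L R Rbar Cs
  have hd : ∀ i, 0 < A i i := fun i => by
    simpa [mulVec_single, single_dotProduct] using
      hA.dotProduct_mulVec_pos (x := Pi.single i 1) (Function.ne_iff.mpr ⟨i, by simp⟩)
  have hAT : Aᵀ = A := by simpa [Matrix.IsHermitian, conjTranspose_eq_transpose_of_trivial] using hA.1
  -- D + L is lower triangular with positive diagonal, hence invertible
  have hBT : (D + L).BlockTriangular OrderDual.toDual := by
    intro i j hij
    have hij' : i < j := hij
    simp [D, L, Matrix.diagonal, hij'.ne, not_lt.mpr hij'.le, Matrix.add_apply]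
  have hdet : (D + L).det = ∏ i, A i i := by
    rw [Matrix.det_of_lowerTriangular _ hBT]
    apply Finset.prod_congr rfl
    intro i _
    simp [D, L, Matrix.diagonal, Matrix.add_apply]
  have hdet_pos : 0 < (D + L).det := hdet ▸ Finset.prod_pos fun i _ => hd i
  have hunit : IsUnit (D + L).det := isUnit_iff_ne_zero.mpr hdet_pos.ne'
  have h1 : (D + L) * R = 1 := Matrix.mul_nonsing_inv _ hunit
  have h2 : R * (D + L) = 1 := Matrix.nonsing_inv_mul _ hunit
  -- decomposition A = D + L + Lᵀ
  have hdec : A = D + L + Lᵀ := by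
    ext i j
    rcases lt_trichotomy i j with h | h | h
    · have : A j i = A i j := congrFun (congrFun hAT i) j
      simp [D, L, Matrix.diagonal, Matrix.add_apply, Matrix.transpose_apply, h, h.ne,
        not_lt.mpr h.le, this.symm]
    · simp [D, L, Matrix.diagonal, Matrix.add_apply, Matrix.transpose_apply, h]
    · simp [D, L, Matrix.diagonal, Matrix.add_apply, Matrix.transpose_apply, h, h.ne',
        not_lt.mpr h.le]
  have hDT : Dᵀ = D := Matrix.diagonal_transpose _
  -- Rbar = Rᵀ D R
  have hDsum : D = (D + L) + (D + L)ᵀ - A := by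
    rw [Matrix.transpose_add, hDT]
    rw [hdec]; abel
  have h1T : Rᵀ * (D + L)ᵀ = 1 := by rw [← Matrix.transpose_mul, h1, Matrix.transpose_one]
  have hRbar : Rbar = Rᵀ * D * R := by
    have e : Rᵀ * ((D + L) + (D + L)ᵀ - A) * R =
        Rᵀ * (D + L) * R + Rᵀ * (D + L)ᵀ * R - Rᵀ * A * R := by noncomm_ring
    show Rᵀ + R - Rᵀ * A * R = _
    conv_rhs => rw [hDsum]
    rw [e, Matrix.mul_assoc Rᵀ (D + L) R, h1, Matrix.mul_one, h1T, Matrix.one_mul]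
  have hDpos : D.PosDef := Matrix.PosDef.diagonal hd
  -- R injective on vectors
  have hRinj : ∀ x : Fin N → ℝ, x ≠ 0 → R *ᵥ x ≠ 0 := by
    intro x hx h0
    apply hx
    have : (D + L) *ᵥ (R *ᵥ x) = x := by rw [mulVec_mulVec, h1, one_mulVec]
    rw [h0, mulVec_zero] at this
    exact this.symm
  have hRbarPD : Rbar.PosDef := by
    rw [hRbar]
    refine Matrix.PosDef.of_dotProduct_mulVec_pos ?_ ?_
    · show (Rᵀ * D * R)ᴴ = _
      have : ∀ M : Matrix (Fin N) (Fin N) ℝ, Mᴴ = Mᵀ := fun M => by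
        ext i j; simp [Matrix.conjTranspose_apply]
      rw [this, Matrix.transpose_mul, Matrix.transpose_mul, transpose_transpose, hDT,
        Matrix.mul_assoc]
    · intro x hx
      have : star x ⬝ᵥ ((Rᵀ * D * R) *ᵥ x) = (R *ᵥ x) ⬝ᵥ (D *ᵥ (R *ᵥ x)) := by
        rw [star_trivial, aux_quad R D x]
      rw [this]
      simpa [star_trivial] using hDpos.dotProduct_mulVec_pos (hRinj x hx)
  refine ⟨hRbarPD, fun v => ?_⟩
  -- D⁻¹
  have hDinv : D⁻¹ = Matrix.diagonal fun i => (A i i)⁻¹ := by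
    apply Matrix.inv_eq_right_inv
    rw [Matrix.diagonal_mul_diagonal]
    rw [show (fun i => A i i * (A i i)⁻¹) = fun _ => (1:ℝ) from
      funext fun i => mul_inv_cancel₀ (hd i).ne', Matrix.diagonal_one]
  have hDDinv : D * D⁻¹ = 1 := by
    rw [hDinv, Matrix.diagonal_mul_diagonal]
    rw [show (fun i => A i i * (A i i)⁻¹) = fun _ => (1:ℝ) from
      funext fun i => mul_inv_cancel₀ (hd i).ne', Matrix.diagonal_one]
  -- Rbar⁻¹
  have hRbinv : Rbar⁻¹ = (D + L) * D⁻¹ * (D + L)ᵀ := by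
    apply Matrix.inv_eq_right_inv
    rw [hRbar]
    calc Rᵀ * D * R * ((D + L) * D⁻¹ * (D + L)ᵀ)
        = Rᵀ * D * (R * (D + L)) * D⁻¹ * (D + L)ᵀ := by
          simp only [Matrix.mul_assoc]
      _ = Rᵀ * (D * D⁻¹) * (D + L)ᵀ := by rw [h2, Matrix.mul_one]; simp only [Matrix.mul_assoc]
      _ = Rᵀ * (D + L)ᵀ := by rw [hDDinv, Matrix.mul_one]
      _ = 1 := h1T
  -- the key matrix identity
  have hM1 : (Rᵀ * A)ᵀ * Rbar⁻¹ * (Rᵀ * A) = A * D⁻¹ * A := by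
    rw [hRbinv, Matrix.transpose_mul, transpose_transpose, hAT]
    calc A * R * ((D + L) * D⁻¹ * (D + L)ᵀ) * (Rᵀ * A)
        = A * (R * (D + L)) * D⁻¹ * ((D + L)ᵀ * Rᵀ) * A := by simp only [Matrix.mul_assoc]
      _ = A * D⁻¹ * A := by
          rw [h2, ← Matrix.transpose_mul, h2, Matrix.transpose_one]
          simp [Matrix.mul_assoc]
  have heq : ((Rᵀ * A) *ᵥ v) ⬝ᵥ (Rbar⁻¹ *ᵥ ((Rᵀ * A) *ᵥ v)) =
      (A *ᵥ v) ⬝ᵥ (D⁻¹ *ᵥ (A *ᵥ v)) := by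
    rw [aux_quad (Rᵀ * A) Rbar⁻¹ v, hM1, aux_quad A D⁻¹ v, hAT]
  set w : Fin N → ℝ := A *ᵥ v with hw
  have hu : D⁻¹ *ᵥ w = fun i => (A i i)⁻¹ * w i := by
    rw [hDinv]; funext i; rw [mulVec_diagonal]
  have hQform : w ⬝ᵥ (D⁻¹ *ᵥ w) = ∑ i, (A i i)⁻¹ * w i ^ 2 := by
    rw [hu, dotProduct]
    apply Finset.sum_congr rfl; intro i _; ring
  have hQ0 : 0 ≤ w ⬝ᵥ (D⁻¹ *ᵥ w) := by
    rw [hQform]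
    apply Finset.sum_nonneg; intro i _
    have := hd i
    positivity
  have hvAv : 0 ≤ v ⬝ᵥ (A *ᵥ v) := by simpa [star_trivial] using hA.posSemidef.dotProduct_mulVec_nonneg v
  have hineq : w ⬝ᵥ (D⁻¹ *ᵥ w) ≤ (Cs : ℝ) ^ 2 * (v ⬝ᵥ (A *ᵥ v)) := by
    set u : Fin N → ℝ := fun i => (A i i)⁻¹ * w i with hudef
    have hQA : w ⬝ᵥ (D⁻¹ *ᵥ w) = v ⬝ᵥ (A *ᵥ u) := by
      rw [hu, dotProduct_comm, hw, aux_sym hA.posSemidef u v]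
    have hCS : (v ⬝ᵥ (A *ᵥ u)) ^ 2 ≤ (v ⬝ᵥ (A *ᵥ v)) * (u ⬝ᵥ (A *ᵥ u)) :=
      aux_cs hA.posSemidef v u
    have hSA : u ⬝ᵥ (A *ᵥ u) ≤ (Cs : ℝ) * ∑ i, A i i * u i ^ 2 := aux_stepA hA u
    have hsum : ∑ i, A i i * u i ^ 2 = w ⬝ᵥ (D⁻¹ *ᵥ w) := by
      rw [hQform]
      apply Finset.sum_congr rfl; intro i _
      have := (hd i).ne'
      field_simp [hudef]
      simp only [hudef]; field_simp
    rw [hsum] at hSA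
    rcases eq_or_lt_of_le hQ0 with h | h
    · rw [← h]; positivity
    · have hq2 : (w ⬝ᵥ (D⁻¹ *ᵥ w)) ^ 2 ≤
          (v ⬝ᵥ (A *ᵥ v)) * ((Cs : ℝ) * (w ⬝ᵥ (D⁻¹ *ᵥ w))) := by
        calc (w ⬝ᵥ (D⁻¹ *ᵥ w)) ^ 2 = (v ⬝ᵥ (A *ᵥ u)) ^ 2 := by rw [hQA]
          _ ≤ (v ⬝ᵥ (A *ᵥ v)) * (u ⬝ᵥ (A *ᵥ u)) := hCS
          _ ≤ (v ⬝ᵥ (A *ᵥ v)) * ((Cs : ℝ) * (w ⬝ᵥ (D⁻¹ *ᵥ w))) :=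
            mul_le_mul_of_nonneg_left hSA hvAv
      have hNpos : N ≠ 0 := by
        rintro rfl
        rw [hQform] at h
        simp at h
      have hCs1 : 1 ≤ Cs := by
        obtain ⟨i⟩ : Nonempty (Fin N) := ⟨⟨0, Nat.pos_of_ne_zero hNpos⟩⟩
        have hmem : i ∈ Finset.univ.filter fun j => A i j ≠ 0 :=
          Finset.mem_filter.mpr ⟨Finset.mem_univ i, (hd i).ne'⟩
        have h1' : 1 ≤ (Finset.univ.filter fun j => A i j ≠ 0).card :=
          Finset.card_pos.mpr ⟨i, hmem⟩
        have h2' : (Finset.univ.filter fun j => A i j ≠ 0).card ≤ Cs :=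
          Finset.le_sup (f := fun i => (Finset.univ.filter fun j => A i j ≠ 0).card)
            (Finset.mem_univ i)
        exact h1'.trans h2'
      have hCs1R : (1 : ℝ) ≤ (Cs : ℝ) := by exact_mod_cast hCs1
      have step : w ⬝ᵥ (D⁻¹ *ᵥ w) ≤ (Cs : ℝ) * (v ⬝ᵥ (A *ᵥ v)) := by nlinarith [hq2, h]
      nlinarith [step, hCs1R, hvAv]
  refine ⟨heq, hineq, ?_⟩
  rw [heq]
  calc Real.sqrt (w ⬝ᵥ (D⁻¹ *ᵥ w)) ≤ Real.sqrt ((Cs : ℝ) ^ 2 * (v ⬝ᵥ (A *ᵥ v))) :=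
        Real.sqrt_le_sqrt hineq
    _ = (Cs : ℝ) * Real.sqrt (v ⬝ᵥ (A *ᵥ v)) := by
        rw [Real.sqrt_mul (sq_nonneg _), Real.sqrt_sq (Nat.cast_nonneg _)]
end

section
/- (Approximation property, Lemma 6.5.) Let A ∈ ℝ^{N×N} be symmetric positive definite with diagonal part D, and let {1,…,N} = F ⊔ C be a partition into fine and coarse index sets. Let W_f = span{e_i : i ∈ F}, W_c = span{e_j : j ∈ C}, let P_f be the A-orthogonal projection onto W_f, and let V_c := { (I − P_f) w : w ∈ W_c } (the range of the ideal interpolation). Let R̄ = RᵀDR be the symmetrized Gauss–Seidel smoother with R = (D+L)^{-1}, and assume there are constants C_s ≥ 1 and δ ∈ (0,1) such that (i) ⟨R̄^{-1}w, w⟩ ≤ C_s² ⟨Dw, w⟩ for all w ∈ ℝ^N, and (ii) ‖w‖²_D ≤ (1 + C_s/δ) ‖w‖²_A for all w ∈ W_f. Then for every v ∈ ℝ^N, the vector v₀ := (I − P_f) v belongs to V_c and satisfies ‖v₀‖_A ≤ ‖v‖_A and ‖v − v₀‖_{R̄^{-1}} ≤ C_s √(1 + C_s/δ) ‖v‖_A.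 -/
open Matrix

/-- approximation property, Lemma 6.5. With `{1,…,N} = F ⊔ C`,
`W_f, W_c` the spans of the corresponding standard basis vectors, `P_f` the
`A`-orthogonal projection onto `W_f`, `V_c = (I − P_f)W_c` the range of the ideal
interpolation, and `R̄` the symmetrized Gauss–Seidel smoother, if
`⟨R̄⁻¹w, w⟩ ≤ C_s²⟨Dw, w⟩` for all `w` and `‖w‖²_D ≤ (1 + C_s/δ)‖w‖²_A` on `W_f`,
then `v₀ = (I − P_f)v ∈ V_c`, `‖v₀‖_A ≤ ‖v‖_A` and
`‖v − v₀‖_{R̄⁻¹} ≤ C_s √(1 + C_s/δ) ‖v‖_A`. -/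
theorem stmt15 {N : ℕ} (A : Matrix (Fin N) (Fin N) ℝ) (hA : A.PosDef)
    (Fset Cset : Set (Fin N)) (hcover : Fset ∪ Cset = Set.univ)
    (hdisj : Disjoint Fset Cset)
    (Cs δ : ℝ) (hCs : 1 ≤ Cs) (hδ : δ ∈ Set.Ioo (0 : ℝ) 1)
    (Pf : Matrix (Fin N) (Fin N) ℝ)
    (hPf_mem : ∀ v : Fin N → ℝ,
      Pf *ᵥ v ∈ Submodule.span ℝ ((fun i => Pi.single i (1 : ℝ)) '' Fset))
    (hPf_orth : ∀ v : Fin N → ℝ,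
      ∀ w ∈ Submodule.span ℝ ((fun i => Pi.single i (1 : ℝ)) '' Fset),
        (v - Pf *ᵥ v) ⬝ᵥ (A *ᵥ w) = 0) :
    let D : Matrix (Fin N) (Fin N) ℝ := Matrix.diagonal fun i => A i i
    let L : Matrix (Fin N) (Fin N) ℝ := Matrix.of fun i j => if j < i then A i j else 0
    let R := (D + L)⁻¹
    let Rbar := Rᵀ + R - Rᵀ * A * R
    let Wc := Submodule.span ℝ ((fun i => Pi.single i (1 : ℝ)) '' Cset)
    (∀ w : Fin N → ℝ, w ⬝ᵥ (Rbar⁻¹ *ᵥ w) ≤ Cs ^ 2 * (w ⬝ᵥ (D *ᵥ w))) →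
      (∀ w ∈ Submodule.span ℝ ((fun i => Pi.single i (1 : ℝ)) '' Fset),
        w ⬝ᵥ (D *ᵥ w) ≤ (1 + Cs / δ) * (w ⬝ᵥ (A *ᵥ w))) →
      ∀ v : Fin N → ℝ,
        (∃ w ∈ Wc, v - Pf *ᵥ v = w - Pf *ᵥ w) ∧
          Real.sqrt ((v - Pf *ᵥ v) ⬝ᵥ (A *ᵥ (v - Pf *ᵥ v))) ≤
            Real.sqrt (v ⬝ᵥ (A *ᵥ v)) ∧
          Real.sqrt ((Pf *ᵥ v) ⬝ᵥ (Rbar⁻¹ *ᵥ (Pf *ᵥ v))) ≤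
            Cs * Real.sqrt (1 + Cs / δ) * Real.sqrt (v ⬝ᵥ (A *ᵥ v)) := by
  intro D L R Rbar Wc hsmooth happrox v
  classical
  have hq : ∀ x : Fin N → ℝ, 0 ≤ x ⬝ᵥ (A *ᵥ x) := by
    intro x
    by_cases hx : x = 0
    · simp [hx]
    · exact le_of_lt (by simpa using hA.dotProduct_mulVec_pos hx)
  have hsym : ∀ x y : Fin N → ℝ, x ⬝ᵥ (A *ᵥ y) = y ⬝ᵥ (A *ᵥ x) := by
    intro x y
    rw [Matrix.dotProduct_mulVec, ← Matrix.mulVec_transpose]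
    rw [show Aᵀ = A from by simpa using hA.1.eq]
    exact dotProduct_comm _ _
  have hcross : ∀ x : Fin N → ℝ, (x - Pf *ᵥ x) ⬝ᵥ (A *ᵥ (Pf *ᵥ x)) = 0 :=
    fun x => hPf_orth x _ (hPf_mem x)
  have pyth : ∀ x : Fin N → ℝ,
      x ⬝ᵥ (A *ᵥ x) =
        (x - Pf *ᵥ x) ⬝ᵥ (A *ᵥ (x - Pf *ᵥ x)) + (Pf *ᵥ x) ⬝ᵥ (A *ᵥ (Pf *ᵥ x)) := by
    intro x
    have h1 := hcross x
    have h2 : (Pf *ᵥ x) ⬝ᵥ (A *ᵥ (x - Pf *ᵥ x)) = 0 := by rw [hsym]; exact h1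
    have hx : x ⬝ᵥ (A *ᵥ x)
        = ((x - Pf *ᵥ x) + Pf *ᵥ x) ⬝ᵥ (A *ᵥ ((x - Pf *ᵥ x) + Pf *ᵥ x)) := by
      rw [sub_add_cancel]
    rw [hx, Matrix.mulVec_add, add_dotProduct, dotProduct_add,
      dotProduct_add, h1, h2]
    ring
  have mem_span : ∀ (S : Set (Fin N)) (x : Fin N → ℝ), (∀ i, i ∉ S → x i = 0) →
      x ∈ Submodule.span ℝ ((fun i => Pi.single i (1 : ℝ)) '' S) := by
    intro S x hx
    have hxsum : x = ∑ i : Fin N, x i • (Pi.single i 1 : Fin N → ℝ) := by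
      funext j
      simp [Finset.sum_apply, Pi.single_apply]
    rw [hxsum]
    refine Submodule.sum_mem _ fun i _ => ?_
    by_cases hi : i ∈ S
    · exact Submodule.smul_mem _ _ (Submodule.subset_span ⟨i, hi, rfl⟩)
    · simp [hx i hi]
  refine ⟨?_, ?_, ?_⟩
  · -- existence of w ∈ Wc
    set w : Fin N → ℝ := fun i => if i ∈ Cset then v i else 0 with hw
    refine ⟨w, mem_span _ _ (fun i hi => by simp [hw, hi]), ?_⟩
    have hu : v - w ∈ Submodule.span ℝ ((fun i => Pi.single i (1 : ℝ)) '' Fset) := by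
      refine mem_span _ _ (fun i hi => ?_)
      have hiC : i ∈ Cset := by
        have hmem : i ∈ Fset ∪ Cset := hcover.symm ▸ Set.mem_univ i
        exact hmem.resolve_left hi
      simp [hw, hiC]
    set u : Fin N → ℝ := v - w with hudef
    have humem : u - Pf *ᵥ u ∈ Submodule.span ℝ ((fun i => Pi.single i (1 : ℝ)) '' Fset) :=
      Submodule.sub_mem _ hu (hPf_mem u)
    have h0 := hPf_orth u _ humem
    have hzero : u - Pf *ᵥ u = 0 := by
      by_contra hne
      exact absurd h0 (ne_of_gt (by simpa using hA.dotProduct_mulVec_pos hne))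
    have hlin : (v - Pf *ᵥ v) - (w - Pf *ᵥ w) = u - Pf *ᵥ u := by
      rw [hudef, Matrix.mulVec_sub]
      abel
    have := hlin.trans hzero
    linear_combination (norm := abel) this
  · -- first norm inequality
    refine Real.sqrt_le_sqrt ?_
    have := pyth v
    have h2 := hq (Pf *ᵥ v)
    linarith
  · -- second norm inequality
    have h1 := hsmooth (Pf *ᵥ v)
    have h2 := happrox (Pf *ᵥ v) (hPf_mem v)
    have h3 : (Pf *ᵥ v) ⬝ᵥ (A *ᵥ (Pf *ᵥ v)) ≤ v ⬝ᵥ (A *ᵥ v) := by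
      have := pyth v
      have h4 := hq (v - Pf *ᵥ v)
      linarith
    have hpos : (0 : ℝ) < 1 + Cs / δ := by
      have : 0 < Cs / δ := div_pos (lt_of_lt_of_le one_pos hCs) hδ.1
      linarith
    have hCs0 : (0 : ℝ) ≤ Cs := le_trans zero_le_one hCs
    have hfinal : (Pf *ᵥ v) ⬝ᵥ (Rbar⁻¹ *ᵥ (Pf *ᵥ v))
        ≤ Cs ^ 2 * ((1 + Cs / δ) * (v ⬝ᵥ (A *ᵥ v))) := by
      have s1 : Cs ^ 2 * ((Pf *ᵥ v) ⬝ᵥ (D *ᵥ (Pf *ᵥ v)))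
          ≤ Cs ^ 2 * ((1 + Cs / δ) * ((Pf *ᵥ v) ⬝ᵥ (A *ᵥ (Pf *ᵥ v)))) :=
        mul_le_mul_of_nonneg_left h2 (sq_nonneg Cs)
      have s2 : Cs ^ 2 * ((1 + Cs / δ) * ((Pf *ᵥ v) ⬝ᵥ (A *ᵥ (Pf *ᵥ v))))
          ≤ Cs ^ 2 * ((1 + Cs / δ) * (v ⬝ᵥ (A *ᵥ v))) := by
        refine mul_le_mul_of_nonneg_left ?_ (sq_nonneg Cs)
        exact mul_le_mul_of_nonneg_left h3 hpos.le
      linarith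
    calc Real.sqrt ((Pf *ᵥ v) ⬝ᵥ (Rbar⁻¹ *ᵥ (Pf *ᵥ v)))
        ≤ Real.sqrt (Cs ^ 2 * ((1 + Cs / δ) * (v ⬝ᵥ (A *ᵥ v)))) := Real.sqrt_le_sqrt hfinal
      _ = Cs * Real.sqrt (1 + Cs / δ) * Real.sqrt (v ⬝ᵥ (A *ᵥ v)) := by
          rw [Real.sqrt_mul (sq_nonneg Cs), Real.sqrt_mul hpos.le,
            Real.sqrt_sq hCs0, mul_assoc]
end
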